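/- arXiv:0808.2169 — 7 statements merged into one kernel-verified Lean document; each statement's English description precedes it below -/
import Mathlib

section
/- Let A and B be two finite multisets of complex numbers, all of whose elements lie on the circle |z| = M for some M > 0. If there exists λ with 0 < λ < M and a constant C such that |Σ_{β ∈ B} β^s − Σ_{α ∈ A} α^s| ≤ C · λ^s for every sufficiently large integer s, then A = B (as multisets). -/
open Finset

lemma aux_swap (S : Multiset ℂ) (t : Finset ℕ) (F : ℂ → ℕ → ℂ) :
    ∑ s ∈ t, (S.map fun β => F β s).sum = (S.map fun β => ∑ s ∈ t, F β s).sum := by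
  induction S using Multiset.induction with
  | empty => simp
  | cons a s ih => simp [Finset.sum_add_distrib, ih]

lemma aux_indicator (S : Multiset ℂ) (z₀ : ℂ) (x : ℂ) :
    (S.map fun β => if β = z₀ then x else 0).sum = (S.count z₀ : ℂ) * x := by
  induction S using Multiset.induction with
  | empty => simp
  | cons a s ih =>
      rw [Multiset.map_cons, Multiset.sum_cons, ih, Multiset.count_cons]
      by_cases h : a = z₀
      · simp [h]; ring
      · have : ¬ z₀ = a := fun hh => h hh.symm
        simp [h, this]

lemma aux_geom (w : ℂ) (hw1 : ‖w‖ = 1) (hw : w ≠ 1) (s₀ N : ℕ) :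
    ‖∑ s ∈ Finset.range N, w ^ (s₀ + s)‖ ≤ 2 / ‖w - 1‖ := by
  have h1 : ∑ s ∈ Finset.range N, w ^ (s₀ + s) = w ^ s₀ * ((w ^ N - 1) / (w - 1)) := by
    rw [← geom_sum_eq hw, Finset.mul_sum]
    exact Finset.sum_congr rfl fun i _ => (pow_add w s₀ i)
  rw [h1, norm_mul, norm_pow, hw1, one_pow, one_mul, norm_div]
  gcongr
  calc ‖w ^ N - 1‖ ≤ ‖w ^ N‖ + ‖(1:ℂ)‖ := norm_sub_le _ _
  _ = 2 := by rw [norm_pow, hw1]; norm_num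

lemma aux_geom_sum_le (r : ℝ) (h0 : 0 ≤ r) (h1 : r < 1) (N : ℕ) :
    ∑ s ∈ Finset.range N, r ^ s ≤ (1 - r)⁻¹ := by
  have := Summable.sum_le_tsum (Finset.range N) (fun i _ => pow_nonneg h0 i)
    (summable_geometric_of_lt_one h0 h1)
  rwa [tsum_geometric_of_lt_one h0 h1] at this

/-- Power-sum rigidity: if `A` and `B` are finite multisets of complex numbers all of
modulus `M > 0`, and the difference of their `s`-th power sums is `O(λ^s)` for some
`0 < λ < M`, then `A = B`. -/
theorem multiset_eq_of_powerSums_small (A B : Multiset ℂ) (M : ℝ) (hM : 0 < M)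
    (hA : ∀ z ∈ A, ‖z‖ = M) (hB : ∀ z ∈ B, ‖z‖ = M)
    (lam C : ℝ) (hlam0 : 0 < lam) (hlamM : lam < M) (s₀ : ℕ)
    (hbd : ∀ s : ℕ, s₀ ≤ s →
      ‖(B.map fun z => z ^ s).sum - (A.map fun z => z ^ s).sum‖
        ≤ C * lam ^ s) :
    A = B := by
  have hC : 0 ≤ C := by
    have h := hbd s₀ le_rfl
    have h0 : (0:ℝ) ≤ C * lam ^ s₀ := le_trans (norm_nonneg _) h
    nlinarith [pow_pos hlam0 s₀]
  set r : ℝ := lam / M with hr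
  have hr0 : 0 ≤ r := le_of_lt (div_pos hlam0 hM)
  have hr1 : r < 1 := (div_lt_one hM).2 hlamM
  ext z₀
  by_cases hz : ‖z₀‖ = M
  swap
  · rw [Multiset.count_eq_zero.2 fun h => hz (hA _ h),
        Multiset.count_eq_zero.2 fun h => hz (hB _ h)]
  -- main case
  have hMne : (M:ℂ) ≠ 0 := by exact_mod_cast hM.ne'
  have hz0 : z₀ ≠ 0 := by
    intro h; rw [h] at hz; simp at hz; exact hM.ne' hz.symm
  set u : ℂ := (starRingEnd ℂ) z₀ / (M:ℂ)^2 with hu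
  have key1 : ∀ β : ℂ, ‖β‖ = M → ‖β * u‖ = 1 := by
    intro β hβ
    have : ‖β * u‖ = M * (M / M^2) := by
      rw [hu, norm_mul, norm_div, hβ,
        Complex.norm_conj, hz, norm_pow, Complex.norm_real, Real.norm_eq_abs, abs_of_pos hM]
    rw [this]; field_simp
  have key2 : ∀ β : ℂ, β * u = 1 ↔ β = z₀ := by
    intro β
    have hconj : (starRingEnd ℂ) z₀ ≠ 0 := by
      simpa using hz0
    constructor
    · intro h
      have h2 : β * (starRingEnd ℂ) z₀ = (M:ℂ)^2 := by
        rw [hu, mul_div_assoc', div_eq_one_iff_eq (pow_ne_zero 2 hMne)] at h; exact h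
      have h3 : z₀ * (starRingEnd ℂ) z₀ = (M:ℂ)^2 := by
        rw [Complex.mul_conj]
        rw [Complex.normSq_eq_norm_sq, hz]
        push_cast; ring
      have := h2.trans h3.symm
      exact mul_right_cancel₀ hconj this
    · intro h
      rw [h, hu]
      have h3 : z₀ * (starRingEnd ℂ) z₀ = (M:ℂ)^2 := by
        rw [Complex.mul_conj, Complex.normSq_eq_norm_sq, hz]; push_cast; ring
      field_simp
      linear_combination h3
  -- notation
  set SN : ℕ → ℂ → ℂ := fun N β => ∑ s ∈ Finset.range N, (β * u) ^ (s₀ + s) with hSN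
  set hh : ℕ → ℂ → ℂ := fun N β => SN N β - (if β = z₀ then (N:ℂ) else 0) with hhh
  set g : ℂ → ℝ := fun β => if β = z₀ then 0 else 2 / ‖β * u - 1‖ with hg
  have hbound : ∀ β : ℂ, ‖β‖ = M → ∀ N : ℕ, ‖hh N β‖ ≤ g β := by
    intro β hβ N
    by_cases h : β = z₀
    · have h1 : β * u = 1 := (key2 β).2 h
      simp only [hhh, hSN, hg, if_pos h, h1, one_pow, Finset.sum_const,
        Finset.card_range, nsmul_eq_mul, mul_one, sub_self, norm_zero, le_refl]
    · have h1 : β * u ≠ 1 := fun hc => h ((key2 β).1 hc)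
      simp only [hhh, hg, if_neg h, sub_zero]
      exact aux_geom (β * u) (key1 β hβ) h1 s₀ N
  -- the main identity
  have hid : ∀ N : ℕ,
      ((B.count z₀ : ℂ) - (A.count z₀ : ℂ)) * N =
        (∑ s ∈ Finset.range N,
          ((B.map fun z => z ^ (s₀ + s)).sum - (A.map fun z => z ^ (s₀ + s)).sum)
            * u ^ (s₀ + s))
        - (B.map (hh N)).sum + (A.map (hh N)).sum := by
    intro N
    have step : ∀ S : Multiset ℂ,
        ∑ s ∈ Finset.range N, (S.map fun z => z ^ (s₀ + s)).sum * u ^ (s₀ + s)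
          = (S.count z₀ : ℂ) * N + (S.map (hh N)).sum := by
      intro S
      have e1 : ∀ s : ℕ, (S.map fun z => z ^ (s₀ + s)).sum * u ^ (s₀ + s)
          = (S.map fun β => (β * u) ^ (s₀ + s)).sum := by
        intro s
        rw [← Multiset.sum_map_mul_right]
        congr 1; apply Multiset.map_congr rfl
        intro x _; rw [mul_pow]
      calc ∑ s ∈ Finset.range N, (S.map fun z => z ^ (s₀ + s)).sum * u ^ (s₀ + s)
          = ∑ s ∈ Finset.range N, (S.map fun β => (β * u) ^ (s₀ + s)).sum := by
            exact Finset.sum_congr rfl fun s _ => e1 s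
        _ = (S.map fun β => SN N β).sum := aux_swap S (Finset.range N) _
        _ = (S.map fun β => (if β = z₀ then (N:ℂ) else 0) + hh N β).sum := by
            congr 1; apply Multiset.map_congr rfl
            intro x _; simp [hhh]
        _ = (S.count z₀ : ℂ) * N + (S.map (hh N)).sum := by
            rw [Multiset.sum_map_add, aux_indicator]
    have hB' := step B
    have hA' := step A
    rw [show (∑ s ∈ Finset.range N,
          ((B.map fun z => z ^ (s₀ + s)).sum - (A.map fun z => z ^ (s₀ + s)).sum)
            * u ^ (s₀ + s)) =
        (∑ s ∈ Finset.range N, (B.map fun z => z ^ (s₀ + s)).sum * u ^ (s₀ + s))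
        - (∑ s ∈ Finset.range N, (A.map fun z => z ^ (s₀ + s)).sum * u ^ (s₀ + s)) by
      rw [← Finset.sum_sub_distrib]; exact Finset.sum_congr rfl fun s _ => by ring]
    rw [hB', hA']; ring
  -- bounds
  have hnormu : ‖u‖ = 1 / M := by
    rw [hu, norm_div, Complex.norm_conj, hz, norm_pow,
      Complex.norm_real, Real.norm_eq_abs, abs_of_pos hM]
    field_simp
  have hT : ∀ N : ℕ, ‖∑ s ∈ Finset.range N,
      ((B.map fun z => z ^ (s₀ + s)).sum - (A.map fun z => z ^ (s₀ + s)).sum)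
        * u ^ (s₀ + s)‖ ≤ C * (1 - r)⁻¹ := by
    intro N
    calc ‖∑ s ∈ Finset.range N,
        ((B.map fun z => z ^ (s₀ + s)).sum - (A.map fun z => z ^ (s₀ + s)).sum)
          * u ^ (s₀ + s)‖
        ≤ ∑ s ∈ Finset.range N, ‖((B.map fun z => z ^ (s₀ + s)).sum
            - (A.map fun z => z ^ (s₀ + s)).sum) * u ^ (s₀ + s)‖ :=
          norm_sum_le _ _
      _ ≤ ∑ s ∈ Finset.range N, C * r ^ s := by
          apply Finset.sum_le_sum
          intro s _
          rw [norm_mul, norm_pow, hnormu]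
          have h1 : ‖(B.map fun z => z ^ (s₀ + s)).sum
              - (A.map fun z => z ^ (s₀ + s)).sum‖ ≤ C * lam ^ (s₀ + s) := by
            exact hbd (s₀ + s) (Nat.le_add_right _ _)
          calc ‖(B.map fun z => z ^ (s₀ + s)).sum
              - (A.map fun z => z ^ (s₀ + s)).sum‖ * (1 / M) ^ (s₀ + s)
              ≤ (C * lam ^ (s₀ + s)) * (1 / M) ^ (s₀ + s) := by
                apply mul_le_mul_of_nonneg_right h1
                positivity
            _ = C * r ^ (s₀ + s) := by
                rw [hr, div_pow, div_pow]; ring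
            _ = C * (r ^ s₀ * r ^ s) := by rw [← pow_add]
            _ ≤ C * (1 * r ^ s) := by
                apply mul_le_mul_of_nonneg_left _ hC
                apply mul_le_mul_of_nonneg_right _ (pow_nonneg hr0 s)
                exact pow_le_one₀ hr0 hr1.le
            _ = C * r ^ s := by ring
      _ = C * ∑ s ∈ Finset.range N, r ^ s := by rw [Finset.mul_sum]
      _ ≤ C * (1 - r)⁻¹ :=
          mul_le_mul_of_nonneg_left (aux_geom_sum_le r hr0 hr1 N) hC
  have hS : ∀ (S : Multiset ℂ), (∀ z ∈ S, ‖z‖ = M) → ∀ N : ℕ,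
      ‖(S.map (hh N)).sum‖ ≤ (S.map g).sum := by
    intro S hSm N
    calc ‖(S.map (hh N)).sum‖ ≤ ((S.map (hh N)).map norm).sum := norm_multiset_sum_le _
      _ = (S.map fun β => ‖hh N β‖).sum := by rw [Multiset.map_map]; rfl
      _ ≤ (S.map g).sum := Multiset.sum_map_le_sum_map _ _
          (fun β hβ => hbound β (hSm β hβ) N)
  set K : ℝ := C * (1 - r)⁻¹ + (B.map g).sum + (A.map g).sum with hK
  have hfin : ∀ N : ℕ, |(B.count z₀ : ℝ) - (A.count z₀ : ℝ)| * N ≤ K := by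
    intro N
    have h1 : ‖((B.count z₀ : ℂ) - (A.count z₀ : ℂ)) * N‖
        = |(B.count z₀ : ℝ) - (A.count z₀ : ℝ)| * N := by
      rw [norm_mul]
      congr 1
      · rw [show ((B.count z₀ : ℂ) - (A.count z₀ : ℂ))
            = (((B.count z₀ : ℝ) - (A.count z₀ : ℝ) : ℝ) : ℂ) by push_cast; ring,
          Complex.norm_real, Real.norm_eq_abs]
      · rw [show ((N : ℂ)) = ((N : ℝ) : ℂ) by push_cast; ring, Complex.norm_real,
          Real.norm_eq_abs, abs_of_nonneg (Nat.cast_nonneg N)]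
    rw [← h1, hid N]
    calc ‖(∑ s ∈ Finset.range N,
          ((B.map fun z => z ^ (s₀ + s)).sum - (A.map fun z => z ^ (s₀ + s)).sum)
            * u ^ (s₀ + s)) - (B.map (hh N)).sum + (A.map (hh N)).sum‖
        ≤ ‖(∑ s ∈ Finset.range N,
          ((B.map fun z => z ^ (s₀ + s)).sum - (A.map fun z => z ^ (s₀ + s)).sum)
            * u ^ (s₀ + s)) - (B.map (hh N)).sum‖ + ‖(A.map (hh N)).sum‖ :=
          norm_add_le _ _
      _ ≤ (‖(∑ s ∈ Finset.range N,
          ((B.map fun z => z ^ (s₀ + s)).sum - (A.map fun z => z ^ (s₀ + s)).sum)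
            * u ^ (s₀ + s))‖ + ‖(B.map (hh N)).sum‖) + ‖(A.map (hh N)).sum‖ := by
          gcongr; exact norm_sub_le _ _
      _ ≤ (C * (1 - r)⁻¹ + (B.map g).sum) + (A.map g).sum := by
          gcongr
          · exact hT N
          · exact hS B hB N
          · exact hS A hA N
      _ = K := by rw [hK]
  -- conclude
  by_contra hne
  have hdiff : ((B.count z₀ : ℤ) - (A.count z₀ : ℤ)) ≠ 0 := by
    intro h
    apply hne
    omega
  have hone : 1 ≤ |(B.count z₀ : ℝ) - (A.count z₀ : ℝ)| := by
    have h0 : 1 ≤ |((B.count z₀ : ℤ) - (A.count z₀ : ℤ) : ℤ)| := Int.one_le_abs hdiff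
    have h2 : (1:ℝ) ≤ |((((B.count z₀ : ℤ) - (A.count z₀ : ℤ) : ℤ)) : ℝ)| := by
      rw [← Int.cast_abs]; exact_mod_cast h0
    have h3 : ((((B.count z₀ : ℤ) - (A.count z₀ : ℤ) : ℤ)) : ℝ)
        = (B.count z₀ : ℝ) - (A.count z₀ : ℝ) := by push_cast; ring
    rwa [h3] at h2
  set N : ℕ := ⌈K⌉₊ + 1 with hN
  have h1 : (N : ℝ) ≤ K := by
    calc (N : ℝ) = 1 * N := by ring
      _ ≤ |(B.count z₀ : ℝ) - (A.count z₀ : ℝ)| * N :=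
          mul_le_mul_of_nonneg_right hone (Nat.cast_nonneg N)
      _ ≤ K := hfin N
  have h2 : K < N := by
    calc K ≤ (⌈K⌉₊ : ℝ) := Nat.le_ceil K
      _ < N := by rw [hN]; push_cast; linarith
  linarith
end

section
/- Let K be a field of characteristic zero and let g₁, g₂ ∈ GL_n(K) with g₁ semisimple (diagonalizable over the algebraic closure). If g₂^s is conjugate to g₁^s in GL_n(K) for infinitely many prime numbers s, then g₂ is conjugate to g₁ in GL_n(K). -/
open Polynomial Matrix

set_option maxHeartbeats 2000000

private lemma commute_aeval_help {R A : Type*} [CommSemiring R] [Semiring A] [Algebra R A]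
    {x y : A} (h : Commute x y) (p : R[X]) : Commute x (Polynomial.aeval y p) := by
  rw [Polynomial.aeval_eq_sum_range]
  exact Commute.sum_right _ _ _ fun i _ => (h.pow_right i).smul_right _

private lemma conj_pow_help {R : Type*} [CommRing R] {n : ℕ}
    (U M : Matrix (Fin n) (Fin n) R) (hU : IsUnit U.det) (k : ℕ) :
    (U * M * U⁻¹) ^ k = U * M ^ k * U⁻¹ := by
  induction k with
  | zero => simp [Matrix.mul_nonsing_inv U hU]
  | succ k ih =>
      rw [pow_succ, ih, pow_succ]
      simp only [Matrix.mul_assoc]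
      rw [← Matrix.mul_assoc U⁻¹ U, Matrix.nonsing_inv_mul U hU, Matrix.one_mul]

private lemma aeval_conj_help {R : Type*} [CommRing R] {n : ℕ}
    (U M : Matrix (Fin n) (Fin n) R) (hU : IsUnit U.det) (p : R[X]) :
    Polynomial.aeval (U * M * U⁻¹) p = U * Polynomial.aeval M p * U⁻¹ := by
  rw [Polynomial.aeval_eq_sum_range, Polynomial.aeval_eq_sum_range,
    Finset.mul_sum, Finset.sum_mul]
  refine Finset.sum_congr rfl fun i _ => ?_
  rw [conj_pow_help U M hU i, Matrix.mul_smul, Matrix.smul_mul]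

private lemma aeval_diagonal_help {R : Type*} [CommRing R] {n : ℕ}
    (d : Fin n → R) (p : R[X]) :
    Polynomial.aeval (Matrix.diagonal d) p
      = Matrix.diagonal (fun i => Polynomial.eval (d i) p) := by
  have h1 : Polynomial.aeval ((Matrix.diagonalAlgHom (n := Fin n) (α := R) R) d) p
      = (Matrix.diagonalAlgHom (n := Fin n) (α := R) R) (Polynomial.aeval d p) :=
    Polynomial.aeval_algHom_apply _ _ _
  simp only [Matrix.diagonalAlgHom_apply] at h1
  rw [h1]
  have h3 : (Polynomial.aeval d p : Fin n → R) = fun i => Polynomial.eval (d i) p := by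
    funext i
    have h2 : Polynomial.aeval ((Pi.evalAlgHom R (fun _ : Fin n => R) i) d) p
        = (Pi.evalAlgHom R (fun _ : Fin n => R) i) (Polynomial.aeval d p) :=
      Polynomial.aeval_algHom_apply _ _ _
    simp only [Pi.evalAlgHom_apply] at h2
    rw [← h2, Polynomial.coe_aeval_eq_eval]
  rw [h3]

/-- Conjugation lemma: over a field `K` of characteristic zero, if `g₁` is semisimple
(diagonalizable over the algebraic closure) and `g₂ ^ s` is conjugate to `g₁ ^ s` in
`GL n K` for infinitely many primes `s`, then `g₂` is conjugate to `g₁`. -/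
theorem conjugation_lemma {K : Type*} [Field K] [CharZero K] {n : ℕ}
    (g₁ g₂ : Matrix (Fin n) (Fin n) K) (h₁ : IsUnit g₁.det) (h₂ : IsUnit g₂.det)
    (hss : ∃ (P : Matrix (Fin n) (Fin n) (AlgebraicClosure K)) (D : Fin n → AlgebraicClosure K),
      IsUnit P.det ∧
        g₁.map (algebraMap K (AlgebraicClosure K)) = P * Matrix.diagonal D * P⁻¹)
    (hconj : {s : ℕ | Nat.Prime s ∧ ∃ P : Matrix (Fin n) (Fin n) K,
        IsUnit P.det ∧ g₂ ^ s = P * g₁ ^ s * P⁻¹}.Infinite) :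
    ∃ P : Matrix (Fin n) (Fin n) K, IsUnit P.det ∧ g₂ = P * g₁ * P⁻¹ := by
  classical
  rcases Nat.eq_zero_or_pos n with hn | hn
  · subst hn
    exact ⟨1, by simp, Subsingleton.elim _ _⟩
  haveI : Nonempty (Fin n) := ⟨⟨0, hn⟩⟩
  set L := AlgebraicClosure K with hL
  let φ : K →+* L := algebraMap K L
  let φm : Matrix (Fin n) (Fin n) K →+* Matrix (Fin n) (Fin n) L := φ.mapMatrix
  have hφm_inj : Function.Injective φm := by
    intro M N h
    ext i j
    have h' := congrArg (fun M => M i j) h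
    simp only [RingHom.mapMatrix_apply, Matrix.map_apply, φm] at h'
    exact φ.injective h'
  obtain ⟨P, D, hP, hA₁eq⟩ := hss
  set A₁ : Matrix (Fin n) (Fin n) L := φm g₁ with hA₁def
  set A₂ : Matrix (Fin n) (Fin n) L := φm g₂ with hA₂def
  have hA₁' : A₁ = P * Matrix.diagonal D * P⁻¹ := hA₁eq
  have hdetA₁ : IsUnit A₁.det := by
    have : φ g₁.det = A₁.det := φ.map_det g₁
    rw [← this]
    exact h₁.map φ
  have hdetA₂ : IsUnit A₂.det := by
    have : φ g₂.det = A₂.det := φ.map_det g₂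
    rw [← this]
    exact h₂.map φ
  have hPP : P * P⁻¹ = 1 := Matrix.mul_nonsing_inv _ hP
  have hPP' : P⁻¹ * P = 1 := Matrix.nonsing_inv_mul _ hP
  -- each D i is nonzero
  have hdiagD : Matrix.diagonal D = P⁻¹ * A₁ * P := by
    rw [hA₁']
    simp only [Matrix.mul_assoc, hPP']
    rw [← Matrix.mul_assoc P⁻¹ P, hPP', Matrix.one_mul, Matrix.mul_one]
  have hD0 : ∀ i, D i ≠ 0 := by
    intro i hDi
    have hu : IsUnit (Matrix.diagonal D).det := by
      rw [hdiagD, Matrix.det_mul, Matrix.det_mul]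
      exact ((Matrix.isUnit_nonsing_inv_det P hP).mul hdetA₁).mul hP
    rw [Matrix.det_diagonal] at hu
    have : (∏ j, D j) = 0 := Finset.prod_eq_zero (Finset.mem_univ i) hDi
    rw [this] at hu
    exact hu.ne_zero rfl
  -- order bound
  set F₁ : Fin n × Fin n → ℕ := fun ij => orderOf (D ij.1 / D ij.2) with hF₁
  set F₂ : L × Fin n → ℕ := fun p => orderOf (p.1 / D p.2) with hF₂
  set N₁ : ℕ := Finset.sup (Finset.univ : Finset (Fin n × Fin n)) F₁ with hN₁
  set N₂ : ℕ := Finset.sup (((minpoly L A₂).roots.toFinset) ×ˢ (Finset.univ : Finset (Fin n)))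
    F₂ with hN₂
  obtain ⟨s, hsmem, hsN⟩ := hconj.exists_gt (max N₁ N₂)
  obtain ⟨hsprime, Pk, hPk, hPowK⟩ := hsmem
  have hs0 : s ≠ 0 := hsprime.ne_zero
  have hkill : ∀ r : L, orderOf r ≤ max N₁ N₂ → r ^ s = 1 → r = 1 := by
    intro r hle hrs
    have hdvd : orderOf r ∣ s := orderOf_dvd_of_pow_eq_one hrs
    rcases hsprime.eq_one_or_self_of_dvd _ hdvd with h1 | h1
    · exact orderOf_eq_one_iff.mp h1
    · omega
  have hDinj : ∀ i j : Fin n, D i ^ s = D j ^ s → D i = D j := by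
    intro i j h
    have hr : (D i / D j) ^ s = 1 := by
      rw [div_pow, h, div_self (pow_ne_zero _ (hD0 j))]
    have hle : orderOf (D i / D j) ≤ max N₁ N₂ := by
      have h1 : F₁ (i, j) ≤ N₁ := Finset.le_sup (Finset.mem_univ (i, j))
      have h2 : F₁ (i, j) = orderOf (D i / D j) := rfl
      rw [h2] at h1
      exact le_trans h1 (le_max_left _ _)
    have := hkill _ hle hr
    exact ((IsUnit.mk0 _ (hD0 j)).div_eq_one_iff_eq).mp this
  -- map the conjugation over K to L
  set Q : Matrix (Fin n) (Fin n) L := φm Pk with hQdef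
  have hQdet : IsUnit Q.det := by
    have : φ Pk.det = Q.det := φ.map_det Pk
    rw [← this]; exact hPk.map φ
  have hQinv : φm (Pk⁻¹) = Q⁻¹ := by
    refine (Matrix.inv_eq_right_inv ?_).symm
    rw [← _root_.map_mul, Matrix.mul_nonsing_inv _ hPk, _root_.map_one]
  have hA₂s : A₂ ^ s = Q * A₁ ^ s * Q⁻¹ := by
    have h' := congrArg φm hPowK
    rw [_root_.map_mul, _root_.map_mul, _root_.map_pow, _root_.map_pow, hQinv] at h'
    exact h'
  -- interpolation polynomial
  set nodes : Finset L := Finset.image D Finset.univ with hnodes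
  have hinjOn : Set.InjOn (fun x : L => x ^ s) nodes := by
    intro x hx y hy hxy
    simp only [hnodes, Finset.coe_image, Set.mem_image, Finset.mem_coe, Finset.coe_univ,
      Set.mem_univ, true_and, Set.image_univ, Set.mem_range] at hx hy
    obtain ⟨i, rfl⟩ := hx
    obtain ⟨j, rfl⟩ := hy
    exact hDinj i j hxy
  set q : L[X] := Lagrange.interpolate nodes (fun x : L => x ^ s) id with hq
  have hqD : ∀ i : Fin n, Polynomial.eval (D i ^ s) q = D i := by
    intro i
    have := Lagrange.eval_interpolate_at_node (r := id) (v := fun x : L => x ^ s) hinjOn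
      (Finset.mem_image_of_mem D (Finset.mem_univ i))
    simpa [hq] using this
  -- conjugate matrices
  set B : Matrix (Fin n) (Fin n) L := Q * A₁ * Q⁻¹ with hB
  have hA₁pow : A₁ ^ s = P * Matrix.diagonal (fun i => D i ^ s) * P⁻¹ := by
    rw [hA₁', conj_pow_help P _ hP s, Matrix.diagonal_pow]
    congr 1
  have hBs : B ^ s = A₂ ^ s := by
    rw [hB, conj_pow_help Q A₁ hQdet s, ← hA₂s]
  have hQP : IsUnit (Q * P).det := by
    rw [Matrix.det_mul]; exact hQdet.mul hP
  have hA₂sconj : A₂ ^ s = (Q * P) * Matrix.diagonal (fun i => D i ^ s) * (Q * P)⁻¹ := by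
    rw [hA₂s, hA₁pow, Matrix.mul_inv_rev]
    simp only [Matrix.mul_assoc]
  have hBconj : B = (Q * P) * Matrix.diagonal D * (Q * P)⁻¹ := by
    rw [hB, hA₁', Matrix.mul_inv_rev]
    simp only [Matrix.mul_assoc]
  have hBaeval : Polynomial.aeval (A₂ ^ s) q = B := by
    rw [hA₂sconj, aeval_conj_help _ _ hQP, aeval_diagonal_help]
    have hfun : (fun i => Polynomial.eval (D i ^ s) q) = D := funext fun i => hqD i
    rw [hfun, hBconj]
  have hCommA₂B : Commute A₂ B := by
    rw [← hBaeval]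
    exact commute_aeval_help ((Commute.refl A₂).pow_right s) q
  have hBdet : IsUnit B.det := by
    rw [hB, Matrix.det_mul, Matrix.det_mul]
    exact (hQdet.mul hdetA₁).mul (Matrix.isUnit_nonsing_inv_det Q hQdet)
  have hBB : B * B⁻¹ = 1 := Matrix.mul_nonsing_inv _ hBdet
  have hBB' : B⁻¹ * B = 1 := Matrix.nonsing_inv_mul _ hBdet
  set Cm : Matrix (Fin n) (Fin n) L := A₂ * B⁻¹ with hCmdef
  have hCmB : Cm * B = A₂ := by
    rw [hCmdef, Matrix.mul_assoc, hBB', Matrix.mul_one]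
  have hCommA₂Binv : Commute A₂ B⁻¹ := by
    show A₂ * B⁻¹ = B⁻¹ * A₂
    calc A₂ * B⁻¹ = B⁻¹ * B * (A₂ * B⁻¹) := by rw [hBB', Matrix.one_mul]
      _ = B⁻¹ * (B * A₂) * B⁻¹ := by simp only [Matrix.mul_assoc]
      _ = B⁻¹ * (A₂ * B) * B⁻¹ := by rw [← hCommA₂B.eq]
      _ = B⁻¹ * A₂ * (B * B⁻¹) := by simp only [Matrix.mul_assoc]
      _ = B⁻¹ * A₂ := by rw [hBB, Matrix.mul_one]
  have hCommBBinv : Commute B B⁻¹ := by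
    show B * B⁻¹ = B⁻¹ * B
    rw [hBB, hBB']
  have hCs : Cm ^ s = 1 := by
    have h1 : Cm ^ s = A₂ ^ s * (B⁻¹) ^ s := hCommA₂Binv.mul_pow s
    have h2 : B ^ s * (B⁻¹) ^ s = 1 := by
      rw [← hCommBBinv.mul_pow, hBB, one_pow]
    rw [h1, ← hBs, h2]
  -- minimal polynomial of Cm
  set m : L[X] := minpoly L Cm with hmdef
  have hCint : IsIntegral L Cm := Matrix.isIntegral Cm
  have haevalCm : Polynomial.aeval Cm ((X : L[X]) ^ s - 1) = 0 := by
    rw [_root_.map_sub, _root_.map_pow, Polynomial.aeval_X, _root_.map_one, hCs, sub_self]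
  have hmdvd : m ∣ (X : L[X]) ^ s - 1 := minpoly.dvd L Cm haevalCm
  have hsL : ((s : ℕ) : L) ≠ 0 := Nat.cast_ne_zero.mpr hs0
  have hsep : ((X : L[X]) ^ s - 1).Separable := by
    have := Polynomial.separable_X_pow_sub_C (1 : L) hsL one_ne_zero
    simpa using this
  have hmsep : m.Separable := hsep.of_dvd hmdvd
  have hmonic : m.Monic := minpoly.monic hCint
  have hmdeg : 0 < m.natDegree := minpoly.natDegree_pos hCint
  have hsplits : m.Splits := IsAlgClosed.splits m
  -- every root of m equals 1
  have hroots1 : ∀ ζ ∈ m.roots, ζ = 1 := by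
    intro ζ hζ
    have hζroot : m.IsRoot ζ := (Polynomial.mem_roots hmonic.ne_zero).mp hζ
    have hζs : ζ ^ s = 1 := by
      obtain ⟨t, ht⟩ := hmdvd
      have h0 : Polynomial.eval ζ ((X : L[X]) ^ s - 1) = 0 := by
        rw [ht, Polynomial.eval_mul, hζroot.eq_zero, zero_mul]
      simp only [Polynomial.eval_sub, Polynomial.eval_pow, Polynomial.eval_X,
        Polynomial.eval_one, sub_eq_zero] at h0
      exact h0
    set e := (Matrix.toLinAlgEquiv' : Matrix (Fin n) (Fin n) L ≃ₐ[L] _) with he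
    have hEig : Module.End.HasEigenvalue (e Cm) ζ := by
      apply Module.End.hasEigenvalue_iff_isRoot.mpr
      rw [minpoly.algEquiv_eq e Cm]
      exact hζroot
    set E := Module.End.eigenspace (e Cm) ζ with hE
    have hEne : E ≠ ⊥ := Module.End.hasEigenvalue_iff.mp hEig
    haveI : Nontrivial E := Submodule.nontrivial_iff_ne_bot.mpr hEne
    have hCommCmA₂ : Commute Cm A₂ := ((Commute.refl A₂).mul_right hCommA₂Binv).symm
    have hCommE : Commute (e Cm) (e A₂) := hCommCmA₂.map e
    have hmapsto : ∀ x ∈ E, (e A₂) x ∈ E := by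
      intro x hx
      rw [hE, Module.End.mem_eigenspace_iff] at hx ⊢
      have h3 : (e Cm) ((e A₂) x) = (e A₂) ((e Cm) x) := by
        have := DFunLike.congr_fun hCommE.eq x
        simpa [Module.End.mul_apply] using this
      rw [h3, hx, _root_.map_smul]
    obtain ⟨μ, hμ⟩ := Module.End.exists_eigenvalue ((e A₂).restrict hmapsto)
    obtain ⟨w, hw⟩ := hμ.exists_hasEigenvector
    have hgw : ((e A₂).restrict hmapsto) w = μ • w := hw.apply_eq_smul
    have hw0 : (w : Fin n → L) ≠ 0 := fun h => hw.2 (Subtype.ext h)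
    have hA₂w : (e A₂) (w : Fin n → L) = μ • (w : Fin n → L) := by
      have := congrArg (Subtype.val) hgw
      rw [LinearMap.restrict_coe_apply] at this
      simpa using this
    have hCmw : (e Cm) (w : Fin n → L) = ζ • (w : Fin n → L) :=
      Module.End.mem_eigenspace_iff.mp w.2
    -- μ is a root of the minimal polynomial of A₂
    have hμroot : μ ∈ (minpoly L A₂).roots := by
      have h1 : Module.End.HasEigenvalue (e A₂) μ :=
        Module.End.hasEigenvalue_of_hasEigenvector
          ⟨Module.End.mem_eigenspace_iff.mpr hA₂w, hw0⟩
      have h2 : (minpoly L (e A₂)).IsRoot μ := Module.End.hasEigenvalue_iff_isRoot.mp h1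
      rw [minpoly.algEquiv_eq e A₂] at h2
      exact (Polynomial.mem_roots (minpoly.ne_zero (Matrix.isIntegral A₂))).mpr h2
    -- compute the eigenvalue of B on w
    have hBCm : B = Cm ^ (s - 1) * A₂ := by
      have h1 : Cm ^ (s - 1) * Cm = Cm ^ s := by
        rw [← pow_succ]
        congr 1
        omega
      calc B = 1 * B := (Matrix.one_mul B).symm
        _ = Cm ^ s * B := by rw [hCs]
        _ = Cm ^ (s - 1) * (Cm * B) := by rw [← h1, Matrix.mul_assoc]
        _ = Cm ^ (s - 1) * A₂ := by rw [hCmB]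
    have hCmpow : ∀ k : ℕ, ((e Cm) ^ k) (w : Fin n → L) = ζ ^ k • (w : Fin n → L) := by
      intro k
      induction k with
      | zero => simp
      | succ k ih =>
          rw [pow_succ, Module.End.mul_apply, hCmw, _root_.map_smul, ih, smul_smul, pow_succ]
          rw [mul_comm]
    have hBw : (e B) (w : Fin n → L) = (ζ ^ (s - 1) * μ) • (w : Fin n → L) := by
      rw [hBCm, _root_.map_mul, _root_.map_pow, Module.End.mul_apply, hA₂w, _root_.map_smul, hCmpow]
      rw [smul_smul, mul_comm]
    -- transfer to the diagonal matrix
    set Rm : Matrix (Fin n) (Fin n) L := Q * P with hRm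
    have hRdet : IsUnit Rm.det := hQP
    have hRR : Rm * Rm⁻¹ = 1 := Matrix.mul_nonsing_inv _ hRdet
    have hRR' : Rm⁻¹ * Rm = 1 := Matrix.nonsing_inv_mul _ hRdet
    set wv : Fin n → L := Rm⁻¹ *ᵥ (w : Fin n → L) with hwv
    have hwv0 : wv ≠ 0 := by
      intro h
      apply hw0
      have h4 : Rm *ᵥ wv = Rm *ᵥ (0 : Fin n → L) := by rw [h]
      rwa [hwv, Matrix.mulVec_mulVec, hRR, Matrix.one_mulVec, Matrix.mulVec_zero] at h4
    have hBw' : B *ᵥ (w : Fin n → L) = (ζ ^ (s - 1) * μ) • (w : Fin n → L) := by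
      have := hBw
      rwa [he, Matrix.toLinAlgEquiv'_apply (R := L)] at this
    have hdiagwv : Matrix.diagonal D *ᵥ wv = (ζ ^ (s - 1) * μ) • wv := by
      have h5 : Rm⁻¹ * B = Matrix.diagonal D * Rm⁻¹ := by
        rw [hBconj]
        calc Rm⁻¹ * (Rm * Matrix.diagonal D * Rm⁻¹)
            = (Rm⁻¹ * Rm) * Matrix.diagonal D * Rm⁻¹ := by simp only [Matrix.mul_assoc]
          _ = Matrix.diagonal D * Rm⁻¹ := by rw [hRR', Matrix.one_mul]
      calc Matrix.diagonal D *ᵥ wv = (Matrix.diagonal D * Rm⁻¹) *ᵥ (w : Fin n → L) := by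
            rw [hwv, Matrix.mulVec_mulVec]
        _ = (Rm⁻¹ * B) *ᵥ (w : Fin n → L) := by rw [h5]
        _ = Rm⁻¹ *ᵥ (B *ᵥ (w : Fin n → L)) := by rw [Matrix.mulVec_mulVec]
        _ = Rm⁻¹ *ᵥ ((ζ ^ (s - 1) * μ) • (w : Fin n → L)) := by rw [hBw']
        _ = (ζ ^ (s - 1) * μ) • wv := by rw [Matrix.mulVec_smul, hwv]
    obtain ⟨i, hi⟩ : ∃ i, wv i ≠ 0 := by
      by_contra h
      push_neg at h
      exact hwv0 (funext h)
    have hDi : D i = ζ ^ (s - 1) * μ := by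
      have h6 := congrFun hdiagwv i
      rw [Matrix.mulVec_diagonal] at h6
      have h7 : D i * wv i = (ζ ^ (s - 1) * μ) * wv i := by
        simpa [Pi.smul_apply, smul_eq_mul] using h6
      exact mul_right_cancel₀ hi h7
    have hζ0 : ζ ≠ 0 := by
      intro h
      rw [h, zero_pow hs0] at hζs
      exact zero_ne_one hζs
    have hζeq : ζ = μ / D i := by
      rw [eq_div_iff (hD0 i)]
      rw [hDi, ← mul_assoc]
      have h8 : ζ * ζ ^ (s - 1) = 1 := by
        rw [← pow_succ']
        have : s - 1 + 1 = s := by omega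
        rw [this, hζs]
      rw [h8, one_mul]
    have hmemμ : μ ∈ (minpoly L A₂).roots.toFinset := Multiset.mem_toFinset.mpr hμroot
    have hle2 : orderOf (μ / D i) ≤ N₂ := by
      have h1 : F₂ (μ, i) ≤ N₂ := Finset.le_sup (Finset.mem_product.mpr ⟨hmemμ, Finset.mem_univ i⟩)
      have h2 : F₂ (μ, i) = orderOf (μ / D i) := rfl
      rwa [h2] at h1
    exact hkill ζ (by rw [hζeq]; exact le_trans hle2 (le_max_right _ _)) hζs
  -- conclude m = X - 1
  have hroots_rep : m.roots = Multiset.replicate m.roots.card 1 :=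
    Multiset.eq_replicate_of_mem hroots1
  have hmprod : m = (X - Polynomial.C 1) ^ Multiset.card m.roots := by
    have h9 := hsplits.eq_prod_roots_of_monic hmonic
    rw [hroots_rep, Multiset.map_replicate, Multiset.prod_replicate] at h9
    exact h9
  have hcarddeg : m.natDegree = Multiset.card m.roots := by
    conv_lhs => rw [hmprod]
    rw [Polynomial.natDegree_pow, Polynomial.natDegree_X_sub_C, mul_one]
  have hcard1 : Multiset.card m.roots = 1 := by
    have hge : 1 ≤ Multiset.card m.roots := by omega
    have hle : Multiset.card m.roots ≤ 1 := by
      by_contra h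
      push_neg at h
      have hdvd2 : (X - Polynomial.C (1 : L)) * (X - Polynomial.C 1) ∣ m := by
        rw [hmprod, ← pow_two]
        exact pow_dvd_pow _ h
      have := hmsep.squarefree _ hdvd2
      exact Polynomial.not_isUnit_of_natDegree_pos _
        (by rw [Polynomial.natDegree_X_sub_C]; omega) this
    omega
  have hmX1 : m = X - Polynomial.C 1 := by rw [hmprod, hcard1, pow_one]
  have hCm1 : Cm = 1 := by
    have h0 : Polynomial.aeval Cm m = 0 := minpoly.aeval L Cm
    rw [hmX1, _root_.map_sub, Polynomial.aeval_X, Polynomial.aeval_C] at h0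
    have h0' : Cm - 1 = 0 := by simpa using h0
    exact sub_eq_zero.mp h0'
  have hA₂B : A₂ = B := by rw [← hCmB, hCm1, Matrix.one_mul]
  have hfinal : φm g₂ = φm (Pk * g₁ * Pk⁻¹) := by
    rw [_root_.map_mul, _root_.map_mul, hQinv]
    exact hA₂B
  exact ⟨Pk, hPk, hφm_inj hfinal⟩
end

section
/- Let q be a prime power and N, n, d integers with n ≥ N/2 and d ≥ 1. Let G_1, ..., G_d be linear subvarieties of P^N over F_q, each of dimension n. Then |G_1(F_q) ∪ ... ∪ G_d(F_q)| ≤ d(π_n − π_{2n−N}) + π_{2n−N}, where π_m = q^m + ... + 1 for m ≥ 0. -/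
open Finset Module Set

lemma geom_aux (q m : ℕ) (hq : 1 ≤ q) :
    (q - 1) * ∑ i ∈ Finset.range m, q ^ i = q ^ m - 1 := by
  induction m with
  | zero => simp
  | succ m ih =>
    have h1 : 1 ≤ q ^ m := Nat.one_le_pow _ _ hq
    have h2 : (q - 1) * q ^ m = q * q ^ m - q ^ m := by
      rw [Nat.sub_mul, one_mul]
    rw [Finset.sum_range_succ, Nat.mul_add, ih, pow_succ, h2]
    have h3 : q ^ m ≤ q * q ^ m := Nat.le_mul_of_pos_left _ (by omega)
    rw [mul_comm q (q ^ m)] at *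
    omega

lemma key_count {F V : Type*} [Field F] [Fintype F] [AddCommGroup V] [Module F V]
    [Finite V] (W : Submodule F V) :
    Set.ncard {x : Projectivization F V | x.rep ∈ W} =
      ∑ i ∈ Finset.range (Module.finrank F W), (Fintype.card F) ^ i := by
  classical
  cases nonempty_fintype V
  have hq : 2 ≤ Fintype.card F := Fintype.one_lt_card
  set S : Set (Projectivization F V) := {x | x.rep ∈ W} with hS
  set T : Set V := (W : Set V) \ {0} with hT
  have e : S × Fˣ ≃ T := by
    refine Equiv.ofBijective
      (fun p => ⟨(p.2 : F) • p.1.1.rep,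
        W.smul_mem _ p.1.2,
        by simp [smul_ne_zero (Units.ne_zero p.2) p.1.1.rep_nonzero]⟩) ⟨?_, ?_⟩
    · rintro ⟨⟨x, hx⟩, c⟩ ⟨⟨y, hy⟩, c'⟩ h
      simp only [Subtype.mk.injEq] at h
      replace h := congrArg Subtype.val h
      simp only at h
      have hxy : x = y := by
        rw [← x.mk_rep, ← y.mk_rep, Projectivization.mk_eq_mk_iff]
        refine ⟨c⁻¹ * c', ?_⟩
        have : ((c : F))⁻¹ • ((c : F) • x.rep) = ((c : F))⁻¹ • ((c' : F) • y.rep) := by rw [h]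
        rw [inv_smul_smul₀ (Units.ne_zero c)] at this
        rw [this]
        simp [Units.smul_def, smul_smul]
      subst hxy
      have hc : (c : F) = (c' : F) :=
        smul_left_injective F x.rep_nonzero h
      simp [Prod.ext_iff, Subtype.ext_iff, Units.ext_iff, hc]
    · rintro ⟨v, hvW, hv0⟩
      simp only [Set.mem_singleton_iff] at hv0
      set x := Projectivization.mk F v hv0 with hx
      have hrep : Projectivization.mk F x.rep x.rep_nonzero = Projectivization.mk F v hv0 :=
        x.mk_rep
      rw [Projectivization.mk_eq_mk_iff] at hrep
      obtain ⟨a, ha⟩ := hrep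
      have hxW : x.rep ∈ W := by
        rw [← ha]; exact W.smul_mem _ hvW
      refine ⟨⟨⟨x, hxW⟩, a⁻¹⟩, ?_⟩
      ext
      simp only
      rw [← ha]
      simp [Units.smul_def, smul_smul]
  have hcard : S.ncard * (Fintype.card F - 1) = Fintype.card F ^ Module.finrank F W - 1 := by
    have h1 : Nat.card (S × Fˣ) = Nat.card T := Nat.card_congr e
    rw [Nat.card_prod, Nat.card_coe_set_eq, Nat.card_eq_fintype_card,
      Fintype.card_units, Nat.card_coe_set_eq] at h1
    rw [h1, hT, Set.ncard_diff_singleton_of_mem W.zero_mem]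
    congr 1
    rw [← Nat.card_coe_set_eq]
    have : Nat.card (W : Set V) = Nat.card W := rfl
    rw [this, Nat.card_eq_fintype_card, card_eq_pow_finrank (K := F) (V := W)]
  have hgeom := geom_aux (Fintype.card F) (Module.finrank F W) (by omega)
  have hpos : 0 < Fintype.card F - 1 := by omega
  have h := hcard.trans hgeom.symm
  rw [mul_comm] at h
  exact Nat.eq_of_mul_eq_mul_left hpos h

lemma ncard_iUnion_fin_le {α : Type*} {d : ℕ} (T : Fin d → Set α) :
    Set.ncard (⋃ i, T i) ≤ ∑ i, (T i).ncard := by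
  induction d with
  | zero => simp
  | succ d ih =>
    have h : (⋃ i, T i) = T 0 ∪ ⋃ i : Fin d, T i.succ := by
      ext x
      simp [Fin.exists_fin_succ]
    rw [h, Fin.sum_univ_succ]
    exact (Set.ncard_union_le _ _).trans (by gcongr; exact ih _)

/-- Union of `d` linear subvarieties of dimension `n ≥ N/2` in `ℙ^N` over a finite
field: the number of rational points is at most `d(π_n − π_{2n−N}) + π_{2n−N}`. -/
theorem card_union_linear_le {F : Type*} [Field F] [Fintype F] (N n d : ℕ)
    (hd : 1 ≤ d) (h2n : N ≤ 2 * n)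
    (G : Fin d → Submodule F (Fin (N + 1) → F))
    (hG : ∀ i, Module.finrank F (G i) = n + 1) :
    Set.ncard (⋃ i, {x : Projectivization F (Fin (N + 1) → F) | x.rep ∈ G i})
      ≤ d * ((∑ i ∈ Finset.range (n + 1), (Fintype.card F) ^ i) -
              ∑ i ∈ Finset.range (2 * n - N + 1), (Fintype.card F) ^ i)
        + ∑ i ∈ Finset.range (2 * n - N + 1), (Fintype.card F) ^ i := by
  classical
  haveI : Finite (Projectivization F (Fin (N + 1) → F)) := Quotient.finite _
  set q := Fintype.card F with hq
  set πn := ∑ i ∈ Finset.range (n + 1), q ^ i with hπn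
  set πk := ∑ i ∈ Finset.range (2 * n - N + 1), q ^ i with hπk
  set B := πn - πk with hB
  have hrankV : Module.finrank F (Fin (N + 1) → F) = N + 1 := by simp
  have hnN : n ≤ N := by
    have h := Submodule.finrank_le (G ⟨0, hd⟩)
    rw [hG, hrankV] at h
    omega
  have hπkn : πk ≤ πn := Finset.sum_le_sum_of_subset (Finset.range_subset_range.2 (by omega))
  set i0 : Fin d := ⟨0, hd⟩ with hi0
  set S : Fin d → Set (Projectivization F (Fin (N + 1) → F)) :=
    fun i => {x | x.rep ∈ G i} with hSdef
  have hSn : ∀ i, (S i).ncard = πn := by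
    intro i
    rw [hSdef]
    rw [key_count (G i), hG i]
  -- bound on each difference
  have hdiff : ∀ i, (S i \ S i0).ncard ≤ B := by
    intro i
    have hsup : Module.finrank F ↥(G i ⊔ G i0) ≤ N + 1 := by
      have h := Submodule.finrank_le (G i ⊔ G i0)
      omega
    have heq := Submodule.finrank_sup_add_finrank_inf_eq (G i) (G i0)
    rw [hG i, hG i0] at heq
    have hm : 2 * n - N + 1 ≤ Module.finrank F ↥(G i ⊓ G i0) := by omega
    have hinter : S i ∩ S i0 = {x | x.rep ∈ G i ⊓ G i0} := by
      ext x; simp [hSdef, Submodule.mem_inf]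
    have hdiffeq : S i \ S i0 = S i \ (S i ∩ S i0) := by
      ext x; simp only [Set.mem_diff, Set.mem_inter_iff]; tauto
    rw [hdiffeq, Set.ncard_diff Set.inter_subset_left, hSn i, hinter,
      key_count (G i ⊓ G i0)]
    exact Nat.sub_le_sub_left
      (Finset.sum_le_sum_of_subset (Finset.range_subset_range.2 hm)) _
  have hdiff0 : (S i0 \ S i0).ncard = 0 := by simp
  -- union bound
  have h1 : (⋃ i, S i) ⊆ S i0 ∪ ⋃ i, (S i \ S i0) := by
    intro x hx
    simp only [Set.mem_iUnion] at hx
    obtain ⟨i, hi⟩ := hx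
    by_cases h0 : x ∈ S i0
    · exact Or.inl h0
    · exact Or.inr (Set.mem_iUnion.2 ⟨i, hi, h0⟩)
  have h2 : (⋃ i, S i).ncard ≤ πn + ∑ i, (S i \ S i0).ncard := by
    calc (⋃ i, S i).ncard ≤ (S i0 ∪ ⋃ i, (S i \ S i0)).ncard :=
          Set.ncard_le_ncard h1 (Set.toFinite _)
      _ ≤ (S i0).ncard + (⋃ i, (S i \ S i0)).ncard := Set.ncard_union_le _ _
      _ ≤ πn + ∑ i, (S i \ S i0).ncard := by
          rw [hSn i0]; gcongr; exact ncard_iUnion_fin_le _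
  have h3 : ∑ i, (S i \ S i0).ncard ≤ (d - 1) * B := by
    rw [← Finset.sum_erase_add _ _ (Finset.mem_univ i0), hdiff0, add_zero]
    calc ∑ i ∈ Finset.univ.erase i0, (S i \ S i0).ncard
        ≤ (Finset.univ.erase i0).card * B :=
          Finset.sum_le_card_nsmul _ _ _ (fun i _ => hdiff i)
      _ = (d - 1) * B := by
          rw [Finset.card_erase_of_mem (Finset.mem_univ i0), Finset.card_univ,
            Fintype.card_fin]
  have h5 : d * B = (d - 1) * B + B := by
    conv_lhs => rw [show d = (d - 1) + 1 from by omega]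
    rw [add_one_mul]
  have hfinal : (⋃ i, S i).ncard ≤ d * B + πk := by omega
  exact hfinal
end

section
/- For positive integers r ≤ N, multidegree d = (d_1, ..., d_r) of positive integers, n = N − r, δ = max(d_1,...,d_r), and d = d_1···d_r, define b'_n(N, d) = (−1)^{n+1}(n+1) + (−1)^N Σ_{c=r}^{N} (−1)^c C(N+1, c+1) Σ_{ν ∈ M(c)} d_1^{ν_1}···d_r^{ν_r}, where M(c) is the set of r-tuples of positive integers summing to c. Then b'_n(N, d) ≤ (−1)^{n+1}(n+1) + d · C(N+1, n) · (δ+1)^n. -/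
open Finset

/-- `tuplesM r c` : the set of `r`-tuples of positive integers summing to `c`. -/
def tuplesM (r c : ℕ) : Finset (Fin r → ℕ) :=
  (Finset.Nat.antidiagonalTuple r c).filter fun ν => ∀ i, 1 ≤ ν i

/-- The primitive middle Betti number `b'_n(N, d)` of a nonsingular complete
intersection of codimension `r` and multidegree `d` in `ℙ^N` (here `n = N − r`),
given by the explicit alternating sum. -/
def bprime (N r : ℕ) (d : Fin r → ℕ) : ℤ :=
  (-1) ^ (N - r + 1) * (N - r + 1) +
    (-1) ^ N * ∑ c ∈ Finset.Icc r N, (-1) ^ c * ((N + 1).choose (c + 1) : ℤ) *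
      ∑ ν ∈ tuplesM r c, ∏ i, (d i : ℤ) ^ ν i

/-! ### Auxiliary lemmas -/

lemma aux_neg_one_pow_mul_le (m : ℕ) (x : ℤ) (hx : 0 ≤ x) : (-1) ^ m * x ≤ x := by
  rcases Nat.even_or_odd m with h | h
  · rw [h.neg_one_pow, one_mul]
  · rw [h.neg_one_pow, neg_one_mul]; linarith


def consEmb (d a : ℕ) : (Fin d → ℕ) ↪ (Fin (d + 1) → ℕ) :=
  ⟨fun g => Fin.cons a g, fun g h hg => by
    funext i
    have := congrFun hg i.succ
    simpa using this⟩

lemma aux_finAntidiagonal_succ (d n : ℕ) :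
    (Finset.finAntidiagonal (d + 1) n : Finset (Fin (d + 1) → ℕ)) =
      (Finset.HasAntidiagonal.antidiagonal n).biUnion fun ab =>
        (Finset.finAntidiagonal d ab.2).map (consEmb d ab.1) := by
  ext f
  simp only [Finset.mem_finAntidiagonal, mem_biUnion, mem_map, consEmb,
    Function.Embedding.coeFn_mk, Finset.HasAntidiagonal.mem_antidiagonal, Prod.exists]
  constructor
  · intro hf
    refine ⟨f 0, ∑ i : Fin d, f i.succ, by rw [← Fin.sum_univ_succ]; exact hf,
      Fin.tail f, rfl, ?_⟩
    exact Fin.cons_self_tail f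
  · rintro ⟨a, b, hab, g, hg, rfl⟩
    rw [Fin.sum_univ_succ]
    change (Fin.cons a g : Fin (d + 1) → ℕ) 0 + ∑ i : Fin d, (Fin.cons a g : Fin (d + 1) → ℕ) i.succ = n
    simp only [Fin.cons_zero, Fin.cons_succ]
    rw [hg, hab]

lemma aux_sum_choose_diag (d n : ℕ) :
    ∑ k ∈ range (n + 1), (k + d).choose k = (n + d + 1).choose n := by
  induction n with
  | zero => simp
  | succ n ih =>
    rw [Finset.sum_range_succ, ih]
    have h1 : n + 1 + d + 1 = (n + d + 1) + 1 := by omega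
    have h2 : n + 1 + d = n + d + 1 := by omega
    rw [h1, h2, Nat.choose_succ_succ (n + d + 1) n]

lemma aux_card_finAnti_le (d : ℕ) :
    ∀ n : ℕ, (Finset.finAntidiagonal (d + 1) n : Finset (Fin (d + 1) → ℕ)).card
      ≤ (n + d).choose n := by
  induction d with
  | zero =>
    intro n
    have h1 : (Finset.finAntidiagonal 1 n : Finset (Fin 1 → ℕ)).card ≤ 1 := by
      apply Finset.card_le_one.mpr
      intro f hf g hg
      simp only [Finset.mem_finAntidiagonal, Fin.sum_univ_one] at hf hg
      funext i
      have : i = 0 := Subsingleton.elim _ _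
      rw [this, hf, hg]
    simpa [Nat.choose_self] using h1
  | succ d ih =>
    intro n
    rw [aux_finAntidiagonal_succ]
    refine Finset.card_biUnion_le.trans ?_
    have hsum : ∀ ab ∈ Finset.HasAntidiagonal.antidiagonal n,
        ((Finset.finAntidiagonal (d + 1) ab.2).map (consEmb (d + 1) ab.1)).card
          ≤ (ab.2 + d).choose ab.2 := by
      intro ab _
      rw [Finset.card_map]
      exact ih ab.2
    refine (Finset.sum_le_sum hsum).trans ?_
    rw [Finset.Nat.sum_antidiagonal_eq_sum_range_succ_mk]
    have hrefl : ∑ k ∈ range (n + 1), ((n - k) + d).choose (n - k)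
        = ∑ k ∈ range (n + 1), (k + d).choose k := by
      have := Finset.sum_range_reflect (fun k => (k + d).choose k) (n + 1)
      simpa using this
    rw [hrefl, aux_sum_choose_diag]
    exact Nat.choose_le_choose n (by omega)

def succEmb (r : ℕ) : (Fin r → ℕ) ↪ (Fin r → ℕ) :=
  ⟨fun f i => f i + 1, fun f g h => funext fun i => by
    have := congrFun h i; simpa using this⟩

lemma aux_tuplesM_eq_map (r c : ℕ) (hrc : r ≤ c) :
    tuplesM r c = (Finset.finAntidiagonal r (c - r) : Finset (Fin r → ℕ)).map
      (succEmb r) := by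
  ext ν
  simp only [tuplesM, mem_filter, Finset.Nat.mem_antidiagonalTuple, mem_map,
    Finset.mem_finAntidiagonal, succEmb, Function.Embedding.coeFn_mk]
  constructor
  · rintro ⟨hsum, hpos⟩
    refine ⟨fun i => ν i - 1, ?_, ?_⟩
    swap
    · funext i
      show ν i - 1 + 1 = ν i
      have := hpos i; omega
    show ∑ i, (ν i - 1) = c - r
    have h1 : ∑ i : Fin r, (ν i - 1 + 1) = ∑ i, ν i :=
      Finset.sum_congr rfl fun i _ => by have := hpos i; omega
    have h2 : ∑ i : Fin r, (ν i - 1 + 1) = ∑ i, (ν i - 1) + r := by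
      rw [Finset.sum_add_distrib, Finset.sum_const, Finset.card_univ,
        Fintype.card_fin, smul_eq_mul, mul_one]
    omega
  · rintro ⟨f, hf, rfl⟩
    constructor
    · show ∑ i, (f i + 1) = c
      have h2 : ∑ i : Fin r, (f i + 1) = ∑ i, f i + r := by
        rw [Finset.sum_add_distrib, Finset.sum_const, Finset.card_univ,
          Fintype.card_fin, smul_eq_mul, mul_one]
      rw [h2, hf]
      omega
    · intro i
      show 1 ≤ f i + 1
      exact Nat.le_add_left 1 (f i)

lemma aux_binom (N r' k : ℕ) (h : k + r' + 1 ≤ N) :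
    (N + 1).choose (k + (r' + 1) + 1) * (k + r').choose k
      ≤ (N + 1).choose (N - (r' + 1)) * (N - (r' + 1)).choose k := by
  have hk : k ≤ N - (r' + 1) := by omega
  have e1 : (N + 1).choose (k + (r' + 1) + 1) = (N + 1).choose (N - (r' + 1) - k) := by
    have h1 : k + (r' + 1) + 1 ≤ N + 1 := by omega
    rw [← Nat.choose_symm h1]
    congr 1
    omega
  have e2 : (N + 1).choose (N - (r' + 1)) * (N - (r' + 1)).choose k
      = (N + 1).choose (N - (r' + 1) - k) * (k + (r' + 1) + 1).choose k := by
    have h1 : N - (r' + 1) ≤ N + 1 := by omega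
    have h2 : N - (r' + 1) - k ≤ N - (r' + 1) := Nat.sub_le _ _
    have h3 := Nat.choose_mul (n := N + 1) h2
    rw [Nat.choose_symm hk] at h3
    have e3 : N + 1 - (N - (r' + 1) - k) = k + (r' + 1) + 1 := by omega
    have e4 : N - (r' + 1) - (N - (r' + 1) - k) = k := by omega
    rw [e3, e4] at h3
    exact h3
  rw [e1, e2]
  exact Nat.mul_le_mul_left _ (Nat.choose_le_choose k (by omega))

lemma aux_S_le (r' k : ℕ) (d : Fin (r' + 1) → ℕ) :
    ∑ ν ∈ tuplesM (r' + 1) (r' + 1 + k), ∏ i, d i ^ ν i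
      ≤ (k + r').choose k * ((∏ i, d i) * (Finset.univ.sup d) ^ k) := by
  rw [aux_tuplesM_eq_map (r' + 1) (r' + 1 + k) (by omega)]
  have hck : r' + 1 + k - (r' + 1) = k := by omega
  rw [hck, Finset.sum_map]
  simp only [succEmb, Function.Embedding.coeFn_mk]
  have hterm : ∀ f ∈ (Finset.finAntidiagonal (r' + 1) k : Finset (Fin (r' + 1) → ℕ)),
      ∏ i, d i ^ (f i + 1) ≤ (∏ i, d i) * (Finset.univ.sup d) ^ k := by
    intro f hf
    simp only [Finset.mem_finAntidiagonal] at hf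
    have h1 : ∏ i, d i ^ (f i + 1) = (∏ i, d i) * ∏ i, d i ^ f i := by
      rw [← Finset.prod_mul_distrib]
      exact Finset.prod_congr rfl fun i _ => by rw [pow_succ, mul_comm]
    rw [h1]
    refine Nat.mul_le_mul_left _ ?_
    calc ∏ i, d i ^ f i ≤ ∏ i, (Finset.univ.sup d) ^ f i :=
          Finset.prod_le_prod' fun i _ =>
            Nat.pow_le_pow_left (Finset.le_sup (Finset.mem_univ i)) _
      _ = (Finset.univ.sup d) ^ ∑ i, f i := Finset.prod_pow_eq_pow_sum _ _ _
      _ = (Finset.univ.sup d) ^ k := by rw [hf]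
  calc ∑ f ∈ (Finset.finAntidiagonal (r' + 1) k : Finset (Fin (r' + 1) → ℕ)),
        ∏ i, d i ^ (f i + 1)
      ≤ (Finset.finAntidiagonal (r' + 1) k : Finset (Fin (r' + 1) → ℕ)).card •
          ((∏ i, d i) * (Finset.univ.sup d) ^ k) :=
        Finset.sum_le_card_nsmul _ _ _ hterm
    _ = (Finset.finAntidiagonal (r' + 1) k : Finset (Fin (r' + 1) → ℕ)).card *
          ((∏ i, d i) * (Finset.univ.sup d) ^ k) := by rw [smul_eq_mul]
    _ ≤ (k + r').choose k * ((∏ i, d i) * (Finset.univ.sup d) ^ k) :=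
        Nat.mul_le_mul_right _ (aux_card_finAnti_le r' k)

lemma aux_sum_bound (N r' : ℕ) (hrN : r' + 1 ≤ N) (d : Fin (r' + 1) → ℕ) :
    ∑ c ∈ Finset.Icc (r' + 1) N,
        (N + 1).choose (c + 1) * ∑ ν ∈ tuplesM (r' + 1) c, ∏ i, d i ^ ν i
      ≤ (∏ i, d i) * (N + 1).choose (N - (r' + 1)) *
          (Finset.univ.sup d + 1) ^ (N - (r' + 1)) := by
  have hIcc : Finset.Icc (r' + 1) N = (range (N - (r' + 1) + 1)).map
      ⟨fun k => r' + 1 + k, add_right_injective (r' + 1)⟩ := by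
    ext c
    simp only [mem_Icc, mem_map, mem_range, Function.Embedding.coeFn_mk]
    constructor
    · intro ⟨h1, h2⟩; exact ⟨c - (r' + 1), by omega, by omega⟩
    · rintro ⟨k, hk, rfl⟩; omega
  rw [hIcc, Finset.sum_map]
  simp only [Function.Embedding.coeFn_mk]
  have step1 : ∀ k ∈ range (N - (r' + 1) + 1),
      (N + 1).choose (r' + 1 + k + 1) * ∑ ν ∈ tuplesM (r' + 1) (r' + 1 + k), ∏ i, d i ^ ν i
        ≤ (N + 1).choose (N - (r' + 1)) * (N - (r' + 1)).choose k *
            ((∏ i, d i) * (Finset.univ.sup d) ^ k) := by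
    intro k hk
    have hkn : k ≤ N - (r' + 1) := by simp only [mem_range] at hk; omega
    calc (N + 1).choose (r' + 1 + k + 1) * ∑ ν ∈ tuplesM (r' + 1) (r' + 1 + k), ∏ i, d i ^ ν i
        ≤ (N + 1).choose (r' + 1 + k + 1) *
            ((k + r').choose k * ((∏ i, d i) * (Finset.univ.sup d) ^ k)) :=
          Nat.mul_le_mul_left _ (aux_S_le r' k d)
      _ = (N + 1).choose (k + (r' + 1) + 1) * (k + r').choose k *
            ((∏ i, d i) * (Finset.univ.sup d) ^ k) := by
          rw [Nat.add_comm (r' + 1) k]; ring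
      _ ≤ (N + 1).choose (N - (r' + 1)) * (N - (r' + 1)).choose k *
            ((∏ i, d i) * (Finset.univ.sup d) ^ k) :=
          Nat.mul_le_mul_right _ (aux_binom N r' k (by omega))
  refine (Finset.sum_le_sum step1).trans ?_
  have hpow : (Finset.univ.sup d + 1) ^ (N - (r' + 1))
      = ∑ k ∈ range (N - (r' + 1) + 1),
          (Finset.univ.sup d) ^ k * (N - (r' + 1)).choose k := by
    rw [add_pow]
    exact Finset.sum_congr rfl fun k _ => by rw [one_pow, mul_one, Nat.cast_id]
  rw [hpow, Finset.mul_sum]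
  exact le_of_eq (Finset.sum_congr rfl fun k _ => by ring)

/-- Bound for the primitive middle Betti number:
`b'_n(N,d) ≤ (−1)^{n+1}(n+1) + d·C(N+1,n)·(δ+1)^n` with `n = N − r`,
`d = d₁⋯d_r` and `δ = max dᵢ`. -/
theorem bprime_le (N r : ℕ) (hr : 1 ≤ r) (hrN : r ≤ N) (d : Fin r → ℕ)
    (hd : ∀ i, 1 ≤ d i) :
    bprime N r d ≤ (-1) ^ (N - r + 1) * (N - r + 1) +
      (∏ i, (d i : ℤ)) * ((N + 1).choose (N - r) : ℤ) *
        ((Finset.univ.sup d : ℕ) + 1 : ℤ) ^ (N - r) := by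
  obtain ⟨r', rfl⟩ : ∃ r', r = r' + 1 := ⟨r - 1, by omega⟩
  unfold bprime
  refine add_le_add (le_refl _) ?_
  calc (-1 : ℤ) ^ N * ∑ c ∈ Finset.Icc (r' + 1) N,
        (-1) ^ c * ((N + 1).choose (c + 1) : ℤ) *
          ∑ ν ∈ tuplesM (r' + 1) c, ∏ i, (d i : ℤ) ^ ν i
      = ∑ c ∈ Finset.Icc (r' + 1) N, (-1) ^ (N + c) *
          (((N + 1).choose (c + 1) : ℤ) *
            ∑ ν ∈ tuplesM (r' + 1) c, ∏ i, (d i : ℤ) ^ ν i) := by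
        rw [Finset.mul_sum]
        exact Finset.sum_congr rfl fun c _ => by rw [pow_add]; ring
    _ ≤ ∑ c ∈ Finset.Icc (r' + 1) N, ((N + 1).choose (c + 1) : ℤ) *
          ∑ ν ∈ tuplesM (r' + 1) c, ∏ i, (d i : ℤ) ^ ν i := by
        refine Finset.sum_le_sum fun c _ => aux_neg_one_pow_mul_le _ _ ?_
        positivity
    _ = ((∑ c ∈ Finset.Icc (r' + 1) N,
          (N + 1).choose (c + 1) * ∑ ν ∈ tuplesM (r' + 1) c, ∏ i, d i ^ ν i : ℕ) : ℤ) := by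
        push_cast
        rfl
    _ ≤ (((∏ i, d i) * (N + 1).choose (N - (r' + 1)) *
          (Finset.univ.sup d + 1) ^ (N - (r' + 1)) : ℕ) : ℤ) :=
        Int.ofNat_le.mpr (aux_sum_bound N r' hrN d)
    _ = (∏ i, (d i : ℤ)) * ((N + 1).choose (N - (r' + 1)) : ℤ) *
          ((Finset.univ.sup d : ℕ) + 1 : ℤ) ^ (N - (r' + 1)) := by
        push_cast
        ring
end

section
/- With notation as above (b'_n(N, d) the explicit alternating sum, δ = max d_i, n = N − r ≥ 0), one has b'_n(N, d) ≤ C(N+1, n) · (δ+1)^N. -/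
open Finset

set_option maxHeartbeats 1000000

lemma mem_tuplesM {r c : ℕ} {ν : Fin r → ℕ} :
    ν ∈ tuplesM r c ↔ (∑ i, ν i) = c ∧ ∀ i, 1 ≤ ν i := by
  simp [tuplesM, Finset.Nat.mem_antidiagonalTuple]

lemma choose_step (a b : ℕ) : a.choose b ≤ (a+1).choose (b+1) := by
  rw [Nat.choose_succ_succ]; omega

lemma choose_steps (a b t : ℕ) : a.choose b ≤ (a+t).choose (b+t) := by
  induction t with
  | zero => simp
  | succ t ih => exact ih.trans (choose_step (a+t) (b+t))

lemma sum_range_choose' (m r : ℕ) : ∑ i ∈ range m, i.choose r = m.choose (r+1) := by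
  induction m with
  | zero => simp
  | succ m ih =>
      rw [Finset.sum_range_succ, ih, Nat.choose_succ_succ m r, Nat.succ_eq_add_one]
      omega

lemma sum_Icc_sub_choose (m r : ℕ) : ∑ j ∈ Icc 1 m, (m - j).choose r = m.choose (r+1) := by
  calc ∑ j ∈ Icc 1 m, (m - j).choose r
      = ∑ i ∈ range m, (m - 1 - i).choose r := by
        rw [← Finset.Ico_add_one_right_eq_Icc, Finset.sum_Ico_eq_sum_range]
        apply Finset.sum_congr (by simp)
        intro i _
        congr 1
        omega
    _ = ∑ i ∈ range m, i.choose r := Finset.sum_range_reflect (fun i => i.choose r) m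
    _ = m.choose (r+1) := sum_range_choose' m r

lemma card_tuplesM_le' (r : ℕ) : ∀ c, (tuplesM (r+1) c).card ≤ (c - 1).choose r := by
  induction r with
  | zero =>
      intro c
      have h1 : (tuplesM 1 c).card ≤ 1 := by
        apply Finset.card_le_one.2
        intro a ha b hb
        rw [mem_tuplesM] at ha hb
        have ha' := ha.1; have hb' := hb.1
        rw [Fin.sum_univ_one] at ha' hb'
        funext i
        have : i = 0 := Subsingleton.elim i 0
        rw [this, ha', hb']
      simpa using h1
  | succ r ih =>
      intro c
      have hinj : ∀ ν ∈ tuplesM (r+2) c, (⟨ν 0, Fin.tail ν⟩ :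
          (_ : ℕ) × (Fin (r+1) → ℕ)) ∈ ((Icc 1 (c-1)).sigma (fun j => tuplesM (r+1) (c-j))) := by
        intro ν hν
        rw [mem_tuplesM] at hν
        obtain ⟨hsum, hpos⟩ := hν
        have htail : ∀ i : Fin (r+1), 1 ≤ Fin.tail ν i := fun i => hpos i.succ
        have hts : 1 ≤ ∑ i, Fin.tail ν i :=
          le_trans (htail 0) (Finset.single_le_sum (fun i _ => Nat.zero_le _) (Finset.mem_univ 0))
        have hdecomp : ν 0 + ∑ i, Fin.tail ν i = c := by
          rw [show (∑ i, Fin.tail ν i) = ∑ i : Fin (r+1), ν i.succ from rfl,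
            ← Fin.sum_univ_succ]
          exact hsum
        simp only [Finset.mem_sigma, Finset.mem_Icc, mem_tuplesM]
        exact ⟨⟨hpos 0, by omega⟩, by omega, htail⟩
      have hcard : (tuplesM (r+2) c).card ≤
          ((Icc 1 (c-1)).sigma (fun j => tuplesM (r+1) (c-j))).card := by
        apply Finset.card_le_card_of_injOn (fun ν => ⟨ν 0, Fin.tail ν⟩) (fun ν hν => hinj ν hν)
        intro ν₁ _ ν₂ _ h
        obtain ⟨h0, ht⟩ := Sigma.mk.inj_iff.1 h
        have ht' : Fin.tail ν₁ = Fin.tail ν₂ := eq_of_heq ht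
        rw [← Fin.cons_self_tail ν₁, ← Fin.cons_self_tail ν₂, h0, ht']
      calc (tuplesM (r+2) c).card
          ≤ ∑ j ∈ Icc 1 (c-1), (tuplesM (r+1) (c-j)).card := by
            rw [← Finset.card_sigma]; exact hcard
        _ ≤ ∑ j ∈ Icc 1 (c-1), (c - j - 1).choose r := by
            apply Finset.sum_le_sum
            intro j _
            simpa using ih (c-j)
        _ ≤ (c - 1).choose (r+1) := by
            rw [show (c-1).choose (r+1) = ∑ j ∈ Icc 1 (c-1), ((c-1) - j).choose r from
              (sum_Icc_sub_choose (c-1) r).symm]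
            apply Finset.sum_le_sum
            intro j hj
            have hj' := Finset.mem_Icc.1 hj
            apply Nat.choose_le_choose
            omega

lemma choose_key {N r c : ℕ} (hr : 1 ≤ r) (hrc : r ≤ c) (hcN : c ≤ N) :
    (N+1).choose (c+1) * (c-1).choose (r-1) ≤ (N+1).choose (N-r) * N.choose c := by
  obtain ⟨r', rfl⟩ : ∃ r', r = r' + 1 := ⟨r-1, by omega⟩
  obtain ⟨c', rfl⟩ : ∃ c', c = c' + 1 := ⟨c-1, by omega⟩
  simp only [Nat.add_sub_cancel]
  have h1 : c'.choose r' ≤ (c'+2).choose (r'+2) :=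
    (choose_step c' r').trans (choose_step (c'+1) (r'+1))
  have h2 : (N+1).choose (c'+2) * (c'+2).choose (r'+2) =
      (N+1).choose (r'+2) * (N - r' - 1).choose (c' - r') := by
    have h := Nat.choose_mul (n := N+1) (k := c'+2) (s := r'+2) (by omega)
    rw [h]
    congr 1 <;> congr 1 <;> omega
  have h3 : (N+1).choose (r'+2) = (N+1).choose (N - (r'+1)) := by
    rw [← Nat.choose_symm (n := N+1) (k := r'+2) (by omega)]
    congr 1
    omega
  have h4 : (N - r' - 1).choose (c' - r') ≤ N.choose (c'+1) := by
    have h := choose_steps (N - r' - 1) (c' - r') (r'+1)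
    have e1 : N - r' - 1 + (r'+1) = N := by omega
    have e2 : c' - r' + (r'+1) = c' + 1 := by omega
    rwa [e1, e2] at h
  calc (N+1).choose (c'+1+1) * c'.choose r'
      ≤ (N+1).choose (c'+2) * (c'+2).choose (r'+2) := Nat.mul_le_mul_left _ h1
    _ = (N+1).choose (N-(r'+1)) * (N - r' - 1).choose (c' - r') := by rw [h2, h3]
    _ ≤ (N+1).choose (N-(r'+1)) * N.choose (c'+1) := Nat.mul_le_mul_left _ h4

/-- Coarse bound for the primitive middle Betti number:
`b'_n(N,d) ≤ C(N+1,n)·(δ+1)^N` with `n = N − r` and `δ = max dᵢ`. -/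
theorem bprime_le_coarse (N r : ℕ) (hr : 1 ≤ r) (hrN : r ≤ N) (d : Fin r → ℕ)
    (hd : ∀ i, 1 ≤ d i) :
    bprime N r d ≤ ((N + 1).choose (N - r) : ℤ) *
      ((Finset.univ.sup d : ℕ) + 1 : ℤ) ^ N := by
  set δ := Finset.univ.sup d with hδ
  set S : ℕ → ℕ := fun c => ∑ ν ∈ tuplesM r c, ∏ i, (d i)^(ν i) with hSdef
  have hS : ∀ c, S c ≤ (c-1).choose (r-1) * δ^c := by
    intro c
    have hcard : (tuplesM r c).card ≤ (c-1).choose (r-1) := by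
      have h := card_tuplesM_le' (r-1) c
      have hrr : r - 1 + 1 = r := by omega
      rwa [hrr] at h
    calc S c ≤ ∑ _ν ∈ tuplesM r c, δ^c := by
          apply Finset.sum_le_sum
          intro ν hν
          obtain ⟨hsum, hpos⟩ := mem_tuplesM.1 hν
          calc ∏ i, (d i)^(ν i) ≤ ∏ i, δ^(ν i) := by
                apply Finset.prod_le_prod'
                intro i _
                exact Nat.pow_le_pow_left (Finset.le_sup (Finset.mem_univ i)) _
            _ = δ^(∑ i, ν i) := Finset.prod_pow_eq_pow_sum _ _ _
            _ = δ^c := by rw [hsum]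
      _ = (tuplesM r c).card * δ^c := by rw [Finset.sum_const, smul_eq_mul]
      _ ≤ (c-1).choose (r-1) * δ^c := Nat.mul_le_mul_right _ hcard
  have hrw : ∀ c : ℕ, (∑ ν ∈ tuplesM r c, ∏ i, (d i : ℤ) ^ ν i) = ((S c : ℕ) : ℤ) := by
    intro c
    rw [hSdef]
    push_cast
    rfl
  have habs : bprime N r d ≤ ((N:ℤ) - r + 1) +
      ∑ c ∈ Finset.Icc r N, (((N+1).choose (c+1) : ℤ)) * (S c : ℤ) := by
    unfold bprime
    have h0 : (0:ℤ) ≤ (N:ℤ) - r + 1 := by omega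
    have hA : (-1:ℤ)^(N-r+1) * ((N:ℤ) - (r:ℤ) + 1) ≤ (N:ℤ) - r + 1 := by
      calc (-1:ℤ)^(N-r+1) * ((N:ℤ)-r+1) ≤ |(-1:ℤ)^(N-r+1) * ((N:ℤ)-r+1)| := le_abs_self _
        _ = (N:ℤ)-r+1 := by
            rw [abs_mul, abs_pow, abs_neg, abs_one, one_pow, one_mul, abs_of_nonneg h0]
    have hB : (-1:ℤ)^N * ∑ c ∈ Finset.Icc r N,
          (-1:ℤ)^c * ((N+1).choose (c+1):ℤ) * ∑ ν ∈ tuplesM r c, ∏ i, (d i : ℤ) ^ ν i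
        ≤ ∑ c ∈ Finset.Icc r N, (((N+1).choose (c+1):ℤ)) * (S c : ℤ) := by
      calc (-1:ℤ)^N * ∑ c ∈ Finset.Icc r N,
            (-1:ℤ)^c * ((N+1).choose (c+1):ℤ) * ∑ ν ∈ tuplesM r c, ∏ i, (d i : ℤ) ^ ν i
          ≤ |(-1:ℤ)^N * ∑ c ∈ Finset.Icc r N,
            (-1:ℤ)^c * ((N+1).choose (c+1):ℤ) * ∑ ν ∈ tuplesM r c, ∏ i, (d i : ℤ) ^ ν i| :=
            le_abs_self _
        _ = |∑ c ∈ Finset.Icc r N,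
            (-1:ℤ)^c * ((N+1).choose (c+1):ℤ) * ∑ ν ∈ tuplesM r c, ∏ i, (d i : ℤ) ^ ν i| := by
            rw [abs_mul, abs_pow, abs_neg, abs_one, one_pow, one_mul]
        _ ≤ ∑ c ∈ Finset.Icc r N,
            |(-1:ℤ)^c * ((N+1).choose (c+1):ℤ) * ∑ ν ∈ tuplesM r c, ∏ i, (d i : ℤ) ^ ν i| :=
            Finset.abs_sum_le_sum_abs _ _
        _ = ∑ c ∈ Finset.Icc r N, (((N+1).choose (c+1):ℤ)) * (S c : ℤ) := by
            apply Finset.sum_congr rfl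
            intro c _
            rw [hrw c, abs_mul, abs_mul, abs_pow, abs_neg, abs_one, one_pow, one_mul,
              Nat.abs_cast, Nat.abs_cast]
    exact add_le_add hA hB
  have hN1 : (N - r + 1) + ∑ c ∈ Finset.Icc r N, (N+1).choose (c+1) * S c ≤
      (N+1).choose (N-r) * (δ+1)^N := by
    have hsum : ∑ c ∈ Finset.Icc r N, (N+1).choose (c+1) * S c ≤
        (N+1).choose (N-r) * ∑ c ∈ Finset.Icc r N, N.choose c * δ^c := by
      rw [Finset.mul_sum]
      apply Finset.sum_le_sum
      intro c hc
      obtain ⟨hrc, hcN⟩ := Finset.mem_Icc.1 hc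
      calc (N+1).choose (c+1) * S c
          ≤ (N+1).choose (c+1) * ((c-1).choose (r-1) * δ^c) := Nat.mul_le_mul_left _ (hS c)
        _ = ((N+1).choose (c+1) * (c-1).choose (r-1)) * δ^c := by ring
        _ ≤ ((N+1).choose (N-r) * N.choose c) * δ^c :=
            Nat.mul_le_mul_right _ (choose_key hr hrc hcN)
        _ = (N+1).choose (N-r) * (N.choose c * δ^c) := by ring
    have hn1 : N - r + 1 ≤ (N+1).choose (N-r) := by
      have h := Nat.choose_le_choose (N-r) (show N-r+1 ≤ N+1 by omega)
      rwa [Nat.choose_succ_self_right] at h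
    have hexp : (δ+1)^N = ∑ c ∈ Finset.range (N+1), N.choose c * δ^c := by
      rw [add_pow]
      apply Finset.sum_congr rfl
      intro k _
      push_cast
      ring
    have hsplit : 1 + ∑ c ∈ Finset.Icc r N, N.choose c * δ^c ≤
        ∑ c ∈ Finset.range (N+1), N.choose c * δ^c := by
      have h0 : (0:ℕ) ∈ Finset.range (N+1) := by simp
      rw [← Finset.add_sum_erase _ _ h0]
      simp only [Nat.choose_zero_right, pow_zero, mul_one, one_mul]
      apply Nat.add_le_add_left
      apply Finset.sum_le_sum_of_subset
      intro c hc
      obtain ⟨hrc, hcN⟩ := Finset.mem_Icc.1 hc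
      simp only [Finset.mem_erase, Finset.mem_range]
      omega
    calc (N - r + 1) + ∑ c ∈ Finset.Icc r N, (N+1).choose (c+1) * S c
        ≤ (N+1).choose (N-r) + (N+1).choose (N-r) * ∑ c ∈ Finset.Icc r N, N.choose c * δ^c :=
          Nat.add_le_add hn1 hsum
      _ = (N+1).choose (N-r) * (1 + ∑ c ∈ Finset.Icc r N, N.choose c * δ^c) := by ring
      _ ≤ (N+1).choose (N-r) * ∑ c ∈ Finset.range (N+1), N.choose c * δ^c :=
          Nat.mul_le_mul_left _ hsplit
      _ = (N+1).choose (N-r) * (δ+1)^N := by rw [hexp]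
  calc bprime N r d
      ≤ ((N:ℤ) - r + 1) + ∑ c ∈ Finset.Icc r N, (((N+1).choose (c+1) : ℤ)) * (S c : ℤ) := habs
    _ = (((N - r + 1) + ∑ c ∈ Finset.Icc r N, (N+1).choose (c+1) * S c : ℕ) : ℤ) := by
        push_cast [Nat.cast_sub hrN]
        ring
    _ ≤ (((N+1).choose (N-r) * (δ+1)^N : ℕ) : ℤ) := by exact_mod_cast hN1
    _ = ((N + 1).choose (N - r) : ℤ) * ((δ : ℕ) + 1 : ℤ) ^ N := by push_cast; ring
end

section
/- Let A ⊂ ℂ be a finite set and suppose the power series Σ_{s≥0} (Σ_{α∈A} α^s) z^s has radius of convergence strictly greater than 1/M, where M > 0. Then every element of A has modulus strictly less than M. -/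
open Finset Filter

/-- If the power series `Σ_s (Σ_{α ∈ A} α^s) z^s` has radius of convergence greater
than `1/M` (expressed by absolute convergence at some `ρ > 1/M`), then every element
of the finite set `A ⊆ ℂ` has modulus less than `M`. -/
theorem abs_lt_of_radius_gt (A : Finset ℂ) (M : ℝ) (hM : 0 < M)
    (h : ∃ ρ : ℝ, 1 / M < ρ ∧
      Summable fun s : ℕ => ‖∑ α ∈ A, α ^ s‖ * ρ ^ s) :
    ∀ α ∈ A, ‖α‖ < M := by
  intro α hα
  by_contra hcon
  push_neg at hcon
  obtain ⟨β, hβA, hβmax⟩ := A.exists_max_image norm ⟨α, hα⟩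
  have hMβ : M ≤ ‖β‖ := hcon.trans (hβmax α hα)
  have hβpos : 0 < ‖β‖ := lt_of_lt_of_le hM hMβ
  have hβ0 : β ≠ 0 := by
    intro h0; rw [h0] at hβpos; simp at hβpos
  obtain ⟨ρ, hρ, hsum⟩ := h
  have hρ0 : 0 < ρ := lt_trans (by positivity) hρ
  set z₀ : ℂ := β⁻¹ with hz₀
  have hz₀abs : ‖z₀‖ = ‖β‖⁻¹ := norm_inv β
  have hz₀lt : ‖z₀‖ < ρ := by
    rw [hz₀abs]
    calc ‖β‖⁻¹ ≤ M⁻¹ := by gcongr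
      _ < ρ := by rwa [one_div] at hρ
  set C := ∑' s : ℕ, ‖∑ α ∈ A, α ^ s‖ * ρ ^ s with hC
  set G : ℝ → ℂ := fun t => ∑ γ ∈ A.erase β, (1 - γ * (t : ℂ) * z₀)⁻¹ with hG
  have key : ∀ t : ℝ, t ∈ Set.Ico (0 : ℝ) 1 → (1 - t)⁻¹ ≤ C + ‖G t‖ := by
    intro t ht
    obtain ⟨ht0, ht1⟩ := ht
    have hnorm : ∀ γ ∈ A, ‖γ * (t : ℂ) * z₀‖ < 1 := by
      intro γ hγ
      have : ‖γ * (t : ℂ) * z₀‖ = ‖γ‖ * t * ‖β‖⁻¹ := by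
        simp [norm_mul, hz₀abs, Complex.norm_real, abs_of_nonneg ht0]
      rw [this]
      calc ‖γ‖ * t * ‖β‖⁻¹
          ≤ ‖β‖ * t * ‖β‖⁻¹ := by gcongr; exact hβmax γ hγ
        _ = t := by field_simp
        _ < 1 := ht1
    have hgeo : ∀ γ ∈ A, Summable (fun s : ℕ => (γ * (t : ℂ) * z₀) ^ s) := fun γ hγ =>
      summable_geometric_of_norm_lt_one (hnorm γ hγ)
    have heq : (∑' s : ℕ, (∑ γ ∈ A, γ ^ s) * ((t : ℂ) * z₀) ^ s)
        = ∑ γ ∈ A, (1 - γ * (t : ℂ) * z₀)⁻¹ := by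
      have h1 : ∀ s : ℕ, (∑ γ ∈ A, γ ^ s) * ((t : ℂ) * z₀) ^ s
          = ∑ γ ∈ A, (γ * (t : ℂ) * z₀) ^ s := by
        intro s
        rw [Finset.sum_mul]
        exact Finset.sum_congr rfl fun γ _ => by rw [← mul_pow, mul_assoc]
      rw [tsum_congr h1, Summable.tsum_finsetSum hgeo]
      exact Finset.sum_congr rfl fun γ hγ => tsum_geometric_of_norm_lt_one (hnorm γ hγ)
    have hb : ‖∑' s : ℕ, (∑ γ ∈ A, γ ^ s) * ((t : ℂ) * z₀) ^ s‖ ≤ C := by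
      apply tsum_of_norm_bounded hsum.hasSum
      intro s
      rw [norm_mul, norm_pow]
      have h2 : ‖(t : ℂ) * z₀‖ ≤ ρ := by
        rw [norm_mul, Complex.norm_real, Real.norm_eq_abs, abs_of_nonneg ht0]
        calc t * ‖z₀‖ ≤ 1 * ‖z₀‖ := by
              gcongr
          _ ≤ ρ := by rw [one_mul]; exact hz₀lt.le
      have h3 : ‖∑ γ ∈ A, γ ^ s‖ = ‖∑ α ∈ A, α ^ s‖ := rfl
      rw [h3]
      gcongr
    rw [heq] at hb
    have hsplit : (∑ γ ∈ A, (1 - γ * (t : ℂ) * z₀)⁻¹)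
        = (1 - (t : ℂ))⁻¹ + G t := by
      rw [← Finset.add_sum_erase A _ hβA]
      congr 2
      rw [mul_comm β (t : ℂ), mul_assoc, mul_inv_cancel₀ hβ0, mul_one]
    rw [hsplit] at hb
    have hval : ‖(1 - (t : ℂ))⁻¹‖ = (1 - t)⁻¹ := by
      rw [norm_inv]
      have : (1 - (t : ℂ)) = ((1 - t : ℝ) : ℂ) := by push_cast; ring
      rw [this, Complex.norm_real, Real.norm_eq_abs, abs_of_nonneg (by linarith)]
    calc (1 - t)⁻¹ = ‖(1 - (t : ℂ))⁻¹‖ := hval.symm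
      _ = ‖((1 - (t : ℂ))⁻¹ + G t) - G t‖ := by ring_nf
      _ ≤ ‖(1 - (t : ℂ))⁻¹ + G t‖ + ‖G t‖ := norm_sub_le _ _
      _ ≤ C + ‖G t‖ := by gcongr
  -- limit argument
  have h1 : Tendsto (fun t : ℝ => (1 - t)⁻¹) (nhdsWithin 1 (Set.Iio 1)) atTop := by
    apply tendsto_inv_nhdsGT_zero.comp
    apply tendsto_nhdsWithin_of_tendsto_nhds_of_eventually_within
    · have h0 : Tendsto (fun t : ℝ => 1 - t) (nhds 1) (nhds (1 - 1)) :=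
        ((continuous_const (y := (1:ℝ))).sub continuous_id).tendsto 1
      rw [sub_self] at h0
      exact h0.mono_left nhdsWithin_le_nhds
    · filter_upwards [self_mem_nhdsWithin] with t ht
      simp only [Set.mem_Iio] at ht
      simp [Set.mem_Ioi]; linarith
  have hcont : Tendsto G (nhds 1) (nhds (G 1)) := by
    apply tendsto_finset_sum
    intro γ hγ
    have hne : 1 - γ * ((1 : ℝ) : ℂ) * z₀ ≠ 0 := by
      simp only [Complex.ofReal_one, mul_one]
      intro h0
      have : γ * z₀ = 1 := by linear_combination -h0
      have : γ = β := by
        field_simp [hz₀] at this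
        calc γ = γ * z₀ * β := by rw [hz₀, mul_assoc, inv_mul_cancel₀ hβ0, mul_one]
          _ = β := by rw [this, one_mul]
      exact (Finset.ne_of_mem_erase hγ) this
    exact ((continuous_const.sub (((continuous_const.mul Complex.continuous_ofReal).mul
      continuous_const))).tendsto 1).inv₀ hne
  have h3 : Tendsto (fun t => ‖G t‖) (nhdsWithin 1 (Set.Iio 1)) (nhds ‖G 1‖) :=
    (hcont.norm).mono_left nhdsWithin_le_nhds
  have h4 : ∀ᶠ t in nhdsWithin 1 (Set.Iio 1), ‖G t‖ < ‖G 1‖ + 1 :=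
    h3.eventually_lt_const (by linarith)
  have h5 : ∀ᶠ t in nhdsWithin 1 (Set.Iio 1), C + (‖G 1‖ + 1) < (1 - t)⁻¹ :=
    h1.eventually (eventually_gt_atTop _)
  have h6 : ∀ᶠ t in nhdsWithin (1:ℝ) (Set.Iio 1), t ∈ Set.Ico (0 : ℝ) 1 := by
    have hpos : ∀ᶠ t : ℝ in nhds 1, 0 < t := eventually_gt_nhds (by norm_num)
    filter_upwards [self_mem_nhdsWithin, hpos.filter_mono nhdsWithin_le_nhds] with t ht htpos
    exact ⟨htpos.le, ht⟩
  obtain ⟨t, ht4, ht5, ht6⟩ := (h4.and (h5.and h6)).exists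
  have := key t ht6
  linarith
end

section
/- Let q be a prime power, d ≤ q + 1 a positive integer, and X a hypersurface of degree d and dimension n in P^{n+1} over F_q. Then |X(F_q)| ≤ d·q^n + π_{n−1}, where π_{n−1} = q^{n−1} + ... + q + 1 (Serre's inequality). Equivalently, |X(F_q)| ≤ d·π_n − (d−1)·π_{2n−N} with N = n + 1, i.e., |X(F_q)| ≤ d(π_n − π_{n−1}) + π_{n−1}. -/
open Finset
open MvPolynomial

lemma hom_eval_smul {F : Type*} [CommSemiring F] {σ : Type*} {f : MvPolynomial σ F} {d : ℕ}
    (hf : f.IsHomogeneous d) (c : F) (x : σ → F) :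
    eval (c • x) f = c ^ d * eval x f := by
  rw [eval_eq, eval_eq, Finset.mul_sum]
  refine Finset.sum_congr rfl fun m hm => ?_
  have hdeg : m.degree = d := by
    have := hf (MvPolynomial.mem_support_iff.mp hm)
    rwa [Finsupp.degree_eq_weight_one]
  calc coeff m f * ∏ i ∈ m.support, (c • x) i ^ m i
      = coeff m f * ((∏ i ∈ m.support, c ^ m i) * ∏ i ∈ m.support, x i ^ m i) := by
        rw [← Finset.prod_mul_distrib]; simp [mul_pow, Pi.smul_apply, smul_eq_mul]
    _ = c ^ d * (coeff m f * ∏ i ∈ m.support, x i ^ m i) := by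
        rw [Finset.prod_pow_eq_pow_sum]
        rw [show ∑ i ∈ m.support, m i = d from hdeg ▸ rfl]
        ring

lemma degree_single' {σ : Type*} (i : σ) (n : ℕ) : (Finsupp.single i n).degree = n := by
  classical
  rcases eq_or_ne n 0 with h | h
  · simp [h, Finsupp.degree]
  · simp [Finsupp.degree_apply, Finsupp.support_single_ne_zero _ h]

lemma univar_zero {F : Type*} [Field F] {f : MvPolynomial (Fin 1) F} {e : ℕ}
    (hf : f ≠ 0) (hhom : f.IsHomogeneous e) (he : 1 ≤ e) {s : Fin 1 → F}
    (hs : eval s f = 0) : s = 0 := by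
  by_contra hne
  have h0 : s 0 ≠ 0 := by
    intro h; apply hne; funext i
    have : i = 0 := Subsingleton.elim _ _
    simp [this, h]
  have key : f = monomial (Finsupp.single 0 e) (coeff (Finsupp.single 0 e) f) := by
    ext m
    have hm : m = Finsupp.single 0 (m 0) := by
      apply Finsupp.ext; intro i
      have : i = 0 := Subsingleton.elim _ _
      simp [this]
    rcases eq_or_ne (m 0) e with h | h
    · rw [coeff_monomial, if_pos (by rw [hm, h]), hm, h]
    · rw [coeff_monomial, if_neg, hhom.coeff_eq_zero]
      · rw [hm, degree_single' 0 (m 0)]; exact h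
      · intro hc; apply h; rw [hm] at hc
        have := DFunLike.congr_fun hc 0
        simpa using this.symm
  have hc : coeff (Finsupp.single 0 e) f ≠ 0 := by
    intro h; apply hf; rw [key, h, map_zero]
  rw [key] at hs
  rw [eval_monomial, Finsupp.prod_single_index (by simp)] at hs
  rcases mul_eq_zero.mp hs with h | h
  · exact hc h
  · exact h0 (by simpa using pow_eq_zero_iff (by omega : e ≠ 0) |>.mp h)


-- eval at 0 of positive-degree homogeneous polynomial
lemma hom_eval_zero {F : Type*} [CommSemiring F] {σ : Type*} {f : MvPolynomial σ F} {d : ℕ}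
    (hf : f.IsHomogeneous d) (hd : 1 ≤ d) : eval (0 : σ → F) f = 0 := by
  have := hom_eval_smul hf 0 0
  rw [smul_zero] at this
  rw [this, zero_pow (by omega), zero_mul]

lemma shear {F : Type*} [Field F] [Fintype F] [DecidableEq F] {m d : ℕ} {f : MvPolynomial (Fin (m + 1)) F}
    (hf : f ≠ 0) (hhom : f.IsHomogeneous d) (hd : 1 ≤ d)
    {v : Fin (m + 1) → F} (hv : v ≠ 0) (hfv : eval v f = 0) :
    ∃ g : MvPolynomial (Fin (m + 1)) F, g ≠ 0 ∧ g.IsHomogeneous d ∧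
      (Finset.univ.filter fun x : Fin (m + 1) → F => eval x g = 0).card
        = (Finset.univ.filter fun x : Fin (m + 1) → F => eval x f = 0).card ∧
      (finSuccEquiv F m g).natDegree + 1 ≤ d := by
  classical
  obtain ⟨i, hi⟩ : ∃ i, v i ≠ 0 := by
    by_contra h; push_neg at h; exact hv (funext h)
  set σ := Equiv.swap (0 : Fin (m + 1)) i with hσ
  set f₁ := rename σ f with hf₁
  have hf₁ne : f₁ ≠ 0 := fun h => hf (rename_injective _ σ.injective (by simpa using h))
  have hf₁hom : f₁.IsHomogeneous d := hhom.rename_isHomogeneous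
  set w : Fin (m + 1) → F := (v i)⁻¹ • (v ∘ σ) with hw
  have hw0 : w 0 = 1 := by
    simp [hw, hσ, Equiv.swap_apply_left, inv_mul_cancel₀ hi]
  have hewf₁ : eval w f₁ = 0 := by
    have h1 : eval w f₁ = eval (w ∘ σ) f := eval_rename σ w f
    have h2 : w ∘ σ = (v i)⁻¹ • v := by
      funext j; simp [hw, Function.comp, hσ]
    rw [h1, h2, hom_eval_smul hhom, hfv, mul_zero]
  set δ : Fin (m + 1) → F := fun j => if j = 0 then 0 else w j with hδ
  set φ : Fin (m + 1) → MvPolynomial (Fin (m + 1)) F := fun j => X j + C (δ j) * X 0 with hφ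
  set ψ : Fin (m + 1) → MvPolynomial (Fin (m + 1)) F := fun j => X j - C (δ j) * X 0 with hψ
  set g := bind₁ φ f₁ with hg
  have hcomp : ∀ p : MvPolynomial (Fin (m + 1)) F, bind₁ ψ (bind₁ φ p) = p := by
    intro p
    rw [bind₁_bind₁]
    have : (fun j => bind₁ ψ (φ j)) = X := by
      funext j
      simp only [hφ, map_add, map_mul, bind₁_X_right, bind₁_C_right]
      have : ψ 0 = X 0 := by simp [hψ, hδ]
      rw [this]
      simp [hψ]
    rw [this]
    exact DFunLike.congr_fun bind₁_X_left p
  have hgne : g ≠ 0 := by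
    intro h
    apply hf₁ne
    have := hcomp f₁
    rw [← hg, h, map_zero] at this
    exact this.symm
  have hghom : g.IsHomogeneous d := by
    have : ∀ j, (φ j).IsHomogeneous 1 := fun j =>
      (isHomogeneous_X _ _).add (isHomogeneous_C_mul_X _ _)
    have h := hhom.rename_isHomogeneous (f := σ).aeval φ this
    rwa [one_mul] at h
  -- evaluation of g
  have hevalg : ∀ x : Fin (m + 1) → F, eval x g = eval (fun j => x j + δ j * x 0) f₁ := by
    intro x
    have h1 : eval x g = eval (fun j => eval x (φ j)) f₁ := eval₂Hom_bind₁ _ _ _ _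
    simpa [hφ] using h1
  -- card equality: zeros of g ↔ zeros of f₁ ↔ zeros of f
  have hcard1 : (Finset.univ.filter fun x : Fin (m + 1) → F => eval x g = 0).card
      = (Finset.univ.filter fun x : Fin (m + 1) → F => eval x f₁ = 0).card := by
    apply Finset.card_bij' (fun x _ => fun j => x j + δ j * x 0)
      (fun y _ => fun j => y j - δ j * y 0)
    · intro x hx
      simp only [Finset.mem_filter, Finset.mem_univ, true_and] at hx ⊢
      rw [← hevalg]; exact hx
    · intro y hy
      simp only [Finset.mem_filter, Finset.mem_univ, true_and] at hy ⊢
      rw [hevalg]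
      have : (fun j => (y j - δ j * y 0) + δ j * (y 0 - δ 0 * y 0)) = y := by
        funext j; simp [hδ]; try ring
      simpa [this] using hy
    · intro x _
      funext j
      have : δ 0 * x 0 = 0 := by simp [hδ]
      simp [this]; try ring
    · intro y _
      funext j
      have : δ 0 * y 0 = 0 := by simp [hδ]
      simp [this]; try ring
  have hcard2 : (Finset.univ.filter fun x : Fin (m + 1) → F => eval x f₁ = 0).card
      = (Finset.univ.filter fun x : Fin (m + 1) → F => eval x f = 0).card := by
    apply Finset.card_bij' (fun x _ => x ∘ σ) (fun y _ => y ∘ σ)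
    · intro x hx
      simp only [Finset.mem_filter, Finset.mem_univ, true_and] at hx ⊢
      rwa [hf₁, eval_rename] at hx
    · intro y hy
      simp only [Finset.mem_filter, Finset.mem_univ, true_and] at hy ⊢
      rw [hf₁, eval_rename]
      have : (y ∘ σ) ∘ σ = y := by funext j; simp [Function.comp, hσ]
      rwa [this]
    · intro x _; funext j; simp [Function.comp, hσ]
    · intro y _; funext j; simp [Function.comp, hσ]
  -- the top coefficient of finSuccEquiv g vanishes
  set P := finSuccEquiv F m g with hP
  have hPne : P ≠ 0 := fun h => hgne ((finSuccEquiv F m).injective (by rw [map_zero]; exact h))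
  have hPdeg : P.natDegree ≤ d := by
    rw [hP, natDegree_finSuccEquiv]
    exact le_trans (degreeOf_le_totalDegree g 0) hghom.totalDegree_le
  have hPcoeffd : P.coeff d = 0 := by
    -- evaluate g at (1,0,...,0)
    set x₀ : Fin (m + 1) → F := Fin.cons 1 (0 : Fin m → F) with hx₀
    have hx : eval x₀ g = 0 := by
      rw [hevalg]
      have : (fun j => x₀ j + δ j * x₀ 0) = w := by
        funext j
        refine Fin.cases ?_ ?_ j
        · simp [hx₀, hδ, hw0]
        · intro k; simp [hx₀, hδ, Fin.succ_ne_zero]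
      rw [this]; exact hewf₁
    have heval : eval x₀ g
        = Polynomial.eval 1 (Polynomial.map (eval (0 : Fin m → F)) P) :=
      eval_eq_eval_mv_eval' _ _ _
    have hsum : Polynomial.eval (1:F) (Polynomial.map (eval (0 : Fin m → F)) P)
        = ∑ j ∈ Finset.range (d + 1), eval (0 : Fin m → F) (P.coeff j) := by
      rw [Polynomial.eval_eq_sum_range' (lt_of_le_of_lt (le_trans Polynomial.natDegree_map_le hPdeg) (Nat.lt_succ_self d))]
      refine Finset.sum_congr rfl fun j _ => by rw [Polynomial.coeff_map, one_pow, mul_one]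
    have hterm : ∀ j ∈ Finset.range (d + 1), j ≠ d → eval (0 : Fin m → F) (P.coeff j) = 0 := by
      intro j hj hjd
      rcases eq_or_ne (P.coeff j) 0 with h | h
      · rw [h, map_zero]
      · have hmem : j < d + 1 := Finset.mem_range.mp hj
        have hcoeffhom : (P.coeff j).IsHomogeneous (d - j) :=
          hghom.finSuccEquiv_coeff_isHomogeneous j (d - j) (by omega)
        exact hom_eval_zero hcoeffhom (by omega)
    have hc : eval (0 : Fin m → F) (P.coeff d) = 0 := by
      have := hx
      rw [heval, hsum] at this
      rw [Finset.sum_eq_single_of_mem d (Finset.self_mem_range_succ d)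
        (fun j hj hjd => hterm j hj hjd)] at this
      exact this
    -- P.coeff d is homogeneous of degree 0, hence a constant
    have hhom0 : (P.coeff d).IsHomogeneous 0 :=
      hghom.finSuccEquiv_coeff_isHomogeneous d 0 (by omega)
    ext mon
    rcases eq_or_ne mon 0 with h | h
    · rw [h]
      have : coeff 0 (P.coeff d) = eval (0 : Fin m → F) (P.coeff d) := by
        rw [eval_zero, constantCoeff_eq]
      rw [this, hc, coeff_zero]
    · rw [hhom0.coeff_eq_zero (by rwa [Ne, Finsupp.degree_eq_zero_iff]), coeff_zero]
  refine ⟨g, hgne, hghom, hcard1.trans hcard2, ?_⟩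
  rcases lt_or_eq_of_le hPdeg with h | h
  · show (finSuccEquiv F m g).natDegree + 1 ≤ d
    rw [← hP]; omega
  · exfalso
    apply hPne
    rw [← Polynomial.leadingCoeff_eq_zero, Polynomial.leadingCoeff, h, hPcoeffd]


section
variable {F : Type*} [Field F] [Fintype F] [DecidableEq F]

-- fiberwise decomposition of the zero count
lemma count_fiber {k : ℕ} (g : MvPolynomial (Fin (k + 2)) F) :
    (Finset.univ.filter fun x : Fin (k + 2) → F => eval x g = 0).card
      = ∑ s : Fin (k + 1) → F, (Finset.univ.filter fun y : F =>
          Polynomial.eval y ((finSuccEquiv F (k + 1) g).map (eval s)) = 0).card := by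
  classical
  rw [Finset.card_eq_sum_card_fiberwise
    (f := fun x : Fin (k + 2) → F => Fin.tail x) (t := Finset.univ) (fun x _ => mem_univ _)]
  refine Finset.sum_congr rfl fun s _ => ?_
  refine Finset.card_bij' (fun x _ => x 0) (fun y _ => Fin.cons y s) ?_ ?_ ?_ ?_
  · intro x hx
    simp only [Finset.mem_filter, Finset.mem_univ, true_and] at hx ⊢
    obtain ⟨hx1, hx2⟩ := hx
    rw [← eval_eq_eval_mv_eval']
    rw [← hx2, Fin.cons_self_tail]
    exact hx1
  · intro y hy
    simp only [Finset.mem_filter, Finset.mem_univ, true_and] at hy ⊢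
    constructor
    · rw [eval_eq_eval_mv_eval']; exact hy
    · simp
  · intro x hx
    simp only [Finset.mem_filter, Finset.mem_univ, true_and] at hx
    show Fin.cons (x 0) s = x
    rw [← hx.2]
    exact Fin.cons_self_tail x
  · intro y _
    simp

-- number of roots of a nonzero polynomial
lemma count_roots_le {p : Polynomial F} (hp : p ≠ 0) :
    (Finset.univ.filter fun y : F => Polynomial.eval y p = 0).card ≤ p.natDegree := by
  classical
  refine le_trans (Finset.card_le_card (fun y hy => ?_)) (le_trans
    (Multiset.toFinset_card_le p.roots) (Polynomial.card_roots' p))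
  simp only [Finset.mem_filter, Finset.mem_univ, true_and] at hy
  rw [Multiset.mem_toFinset, Polynomial.mem_roots hp]
  exact hy

lemma affine_bound : ∀ (k d : ℕ) (f : MvPolynomial (Fin (k + 2)) F), f ≠ 0 →
    f.IsHomogeneous d → 1 ≤ d → d ≤ Fintype.card F + 1 →
    (Finset.univ.filter fun x : Fin (k + 2) → F => eval x f = 0).card
      ≤ (d * (Fintype.card F - 1) + 1) * Fintype.card F ^ k := by
  classical
  intro k
  induction k with
  | zero =>
    intro d f hf hhom hd hdq
    set q := Fintype.card F with hqdef
    have hq : 2 ≤ q := Fintype.one_lt_card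
    by_cases hvz : ∃ v : Fin 2 → F, v ≠ 0 ∧ eval v f = 0
    · obtain ⟨v, hv, hfv⟩ := hvz
      obtain ⟨g, hgne, hghom, hcardeq, hjd⟩ := shear hf hhom hd hv hfv
      rw [← hcardeq]
      set P := finSuccEquiv F 1 g with hP
      set j := P.natDegree with hj
      have hPne : P ≠ 0 := fun h => hgne ((finSuccEquiv F 1).injective (by rw [map_zero]; exact h))
      have hfj : P.coeff j ≠ 0 := Polynomial.leadingCoeff_ne_zero.mpr hPne
      have hfjhom : (P.coeff j).IsHomogeneous (d - j) :=
        hghom.finSuccEquiv_coeff_isHomogeneous j (d - j) (by omega)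
      rw [count_fiber g]
      rw [← Finset.sum_filter_add_sum_filter_not Finset.univ (fun s : Fin 1 → F => P.map (eval s) = 0)]
      set Cset := Finset.univ.filter (fun s : Fin 1 → F => P.map (eval s) = 0) with hCset
      have hCc : Cset.card ≤ 1 := by
        have hsub : Cset ⊆ {0} := by
          intro s hs
          simp only [hCset, Finset.mem_filter, Finset.mem_univ, true_and] at hs
          have : eval s (P.coeff j) = 0 := by
            have := congrArg (fun p => Polynomial.coeff p j) hs
            simpa [Polynomial.coeff_map] using this
          simp [univar_zero hfj hfjhom (by omega) this]
        exact le_trans (Finset.card_le_card hsub) (by simp)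
      have h1 : ∑ s ∈ Cset, (Finset.univ.filter fun y : F =>
            Polynomial.eval y (P.map (eval s)) = 0).card ≤ Cset.card * q := by
        refine le_trans (Finset.sum_le_card_nsmul _ _ q fun s _ => ?_) (by simp [mul_comm])
        exact le_trans (Finset.card_filter_le _ _) (by simp [hqdef])
      set NCset := Finset.univ.filter (fun s : Fin 1 → F => ¬ P.map (eval s) = 0) with hNCset
      have hsplit : Cset.card + NCset.card = q := by
        rw [hCset, hNCset, Finset.card_filter_add_card_filter_not]
        simp [Fintype.card_fun, hqdef]
      have h2 : ∑ s ∈ NCset,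
            (Finset.univ.filter fun y : F => Polynomial.eval y (P.map (eval s)) = 0).card
          ≤ NCset.card * j := by
        refine le_trans (Finset.sum_le_card_nsmul _ _ j fun s hs => ?_) (by simp [smul_eq_mul])
        simp only [hNCset, Finset.mem_filter, Finset.mem_univ, true_and] at hs
        exact le_trans (count_roots_le hs) Polynomial.natDegree_map_le
      refine le_trans (Nat.add_le_add h1 h2) ?_
      have hjq : j + 1 ≤ d := hjd
      have key : Cset.card * q + NCset.card * j ≤ (d * (q - 1) + 1) := by
        zify [show 1 ≤ q by omega]
        have hCc' : (Cset.card : ℤ) ≤ 1 := by exact_mod_cast hCc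
        have hsplit' : (Cset.card : ℤ) + NCset.card = q := by exact_mod_cast hsplit
        have hj' : (j : ℤ) + 1 ≤ d := by exact_mod_cast hjq
        have hq' : (2 : ℤ) ≤ q := by exact_mod_cast hq
        have hCc0 : (0 : ℤ) ≤ Cset.card := by positivity
        have hj0 : (0 : ℤ) ≤ j := by positivity
        have hdq' : (d : ℤ) ≤ q + 1 := by exact_mod_cast hdq
        have t1 : (Cset.card : ℤ) * ((q : ℤ) - j) ≤ 1 * ((q : ℤ) - j) :=
          mul_le_mul_of_nonneg_right hCc' (by linarith)
        have t3 : (NCset.card : ℤ) * j = (q : ℤ) * j - (Cset.card : ℤ) * j := by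
          rw [← hsplit']; ring
        have t2 : (j : ℤ) * ((q : ℤ) - 1) ≤ ((d : ℤ) - 1) * ((q : ℤ) - 1) :=
          mul_le_mul_of_nonneg_right (by linarith) (by linarith)
        linarith [t1, t2, t3]
      simpa using key
    · push_neg at hvz
      have hsub : (Finset.univ.filter fun x : Fin 2 → F => eval x f = 0) ⊆ {0} := by
        intro x hx
        simp only [Finset.mem_filter, Finset.mem_univ, true_and] at hx
        by_contra h
        exact absurd hx (by simpa using hvz x (by simpa using h))
      have hone : (Finset.univ.filter fun x : Fin 2 → F => eval x f = 0).card ≤ 1 :=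
        le_trans (Finset.card_le_card hsub) (by simp)
      refine le_trans hone ?_
      have : 1 ≤ d * (q - 1) + 1 := by omega
      calc 1 ≤ d * (q - 1) + 1 := this
        _ ≤ (d * (q - 1) + 1) * q ^ 0 := by simp
  | succ k ih =>
    intro d f hf hhom hd hdq
    set q := Fintype.card F with hqdef
    have hq : 2 ≤ q := Fintype.one_lt_card
    by_cases hvz : ∃ v : Fin (k + 3) → F, v ≠ 0 ∧ eval v f = 0
    · obtain ⟨v, hv, hfv⟩ := hvz
      obtain ⟨g, hgne, hghom, hcardeq, hjd⟩ := shear hf hhom hd hv hfv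
      rw [← hcardeq]
      set P := finSuccEquiv F (k + 2) g with hP
      set j := P.natDegree with hj
      have hPne : P ≠ 0 := fun h => hgne ((finSuccEquiv F (k + 2)).injective (by rw [map_zero]; exact h))
      have hfj : P.coeff j ≠ 0 := Polynomial.leadingCoeff_ne_zero.mpr hPne
      have hfjhom : (P.coeff j).IsHomogeneous (d - j) :=
        hghom.finSuccEquiv_coeff_isHomogeneous j (d - j) (by omega)
      rw [count_fiber g]
      rw [← Finset.sum_filter_add_sum_filter_not Finset.univ (fun s : Fin (k + 2) → F => P.map (eval s) = 0)]
      set Cset := Finset.univ.filter (fun s : Fin (k + 2) → F => P.map (eval s) = 0) with hCset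
      set e := d - j with he
      have hed : j + e = d := by omega
      have he1 : 1 ≤ e := by omega
      have hCc : Cset.card ≤ (e * (q - 1) + 1) * q ^ k := by
        have hsub : Cset ⊆ Finset.univ.filter (fun s : Fin (k + 2) → F => eval s (P.coeff j) = 0) := by
          intro s hs
          simp only [hCset, Finset.mem_filter, Finset.mem_univ, true_and] at hs ⊢
          have := congrArg (fun p => Polynomial.coeff p j) hs
          simpa [Polynomial.coeff_map] using this
        exact le_trans (Finset.card_le_card hsub)
          (ih e (P.coeff j) hfj hfjhom he1 (by omega))
      have h1 : ∑ s ∈ Cset, (Finset.univ.filter fun y : F =>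
            Polynomial.eval y (P.map (eval s)) = 0).card ≤ Cset.card * q := by
        refine le_trans (Finset.sum_le_card_nsmul _ _ q fun s _ => ?_) (by simp [mul_comm])
        exact le_trans (Finset.card_filter_le _ _) (by simp [hqdef])
      set NCset := Finset.univ.filter (fun s : Fin (k + 2) → F => ¬ P.map (eval s) = 0) with hNCset
      have hsplit : Cset.card + NCset.card = q ^ (k + 2) := by
        rw [hCset, hNCset, Finset.card_filter_add_card_filter_not]
        simp [Fintype.card_fun, hqdef]
      have h2 : ∑ s ∈ NCset,
            (Finset.univ.filter fun y : F => Polynomial.eval y (P.map (eval s)) = 0).card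
          ≤ NCset.card * j := by
        refine le_trans (Finset.sum_le_card_nsmul _ _ j fun s hs => ?_) (by simp [smul_eq_mul])
        simp only [hNCset, Finset.mem_filter, Finset.mem_univ, true_and] at hs
        exact le_trans (count_roots_le hs) Polynomial.natDegree_map_le
      refine le_trans (Nat.add_le_add h1 h2) ?_
      have hjq : j + 1 ≤ d := hjd
      have key : Cset.card * q + NCset.card * j ≤ (d * (q - 1) + 1) * q ^ (k + 1) := by
        zify [show 1 ≤ q by omega]
        have hCc' : (Cset.card : ℤ) ≤ ((e : ℤ) * ((q : ℤ) - 1) + 1) * (q : ℤ) ^ k := by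
          have := hCc
          zify [show 1 ≤ q by omega] at this
          exact this
        have hsplit' : (Cset.card : ℤ) + NCset.card = (q : ℤ) ^ (k + 2) := by exact_mod_cast hsplit
        have hj' : (j : ℤ) + 1 ≤ d := by exact_mod_cast hjq
        have hq' : (2 : ℤ) ≤ q := by exact_mod_cast hq
        have hed' : (j : ℤ) + e = d := by exact_mod_cast hed
        have he1' : (1 : ℤ) ≤ e := by exact_mod_cast he1
        have hdq' : (d : ℤ) ≤ q + 1 := by exact_mod_cast hdq
        have hj0 : (0 : ℤ) ≤ j := by positivity
        have hqk : (0 : ℤ) ≤ (q : ℤ) ^ k := by positivity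
        have t1 : (Cset.card : ℤ) * ((q : ℤ) - j)
            ≤ (((e : ℤ) * ((q : ℤ) - 1) + 1) * (q : ℤ) ^ k) * ((q : ℤ) - j) :=
          mul_le_mul_of_nonneg_right hCc' (by linarith)
        have t3 : (NCset.card : ℤ) * j = (q : ℤ) ^ (k + 2) * j - (Cset.card : ℤ) * j := by
          rw [← hsplit']; ring
        have idty : ((d : ℤ) * ((q : ℤ) - 1) + 1) * (q : ℤ) ^ (k + 1)
            - ((((e : ℤ) * ((q : ℤ) - 1) + 1) * (q : ℤ) ^ k) * ((q : ℤ) - j)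
              + (q : ℤ) ^ (k + 2) * j)
            = (q : ℤ) ^ k * ((j : ℤ) * ((e : ℤ) - 1) * ((q : ℤ) - 1)) := by
          rw [← hed']; ring
        have hnn : (0 : ℤ) ≤ (q : ℤ) ^ k * ((j : ℤ) * ((e : ℤ) - 1) * ((q : ℤ) - 1)) := by
          apply mul_nonneg hqk
          apply mul_nonneg (mul_nonneg hj0 (by linarith)) (by linarith)
        linarith [t1, t3, idty, hnn]
      exact key
    · push_neg at hvz
      have hsub : (Finset.univ.filter fun x : Fin (k + 3) → F => eval x f = 0) ⊆ {0} := by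
        intro x hx
        simp only [Finset.mem_filter, Finset.mem_univ, true_and] at hx
        by_contra h
        exact absurd hx (by simpa using hvz x (by simpa using h))
      have hone : (Finset.univ.filter fun x : Fin (k + 3) → F => eval x f = 0).card ≤ 1 :=
        le_trans (Finset.card_le_card hsub) (by simp)
      refine le_trans hone ?_
      have h1 : 1 ≤ d * (q - 1) + 1 := by omega
      calc 1 ≤ d * (q - 1) + 1 := h1
        _ ≤ (d * (q - 1) + 1) * q ^ (k + 1) := Nat.le_mul_of_pos_right _ (by positivity)
end


/-- Serre's inequality: a hypersurface of degree `d ≤ q + 1` and dimension `n` in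
`ℙ^{n+1}` over a finite field `F` with `q` elements has at most `d·q^n + π_{n−1}`
rational points, where `π_{n−1} = 1 + q + ⋯ + q^{n−1}`. -/
theorem serre_inequality {F : Type*} [Field F] [Fintype F] (n d : ℕ)
    (f : MvPolynomial (Fin (n + 2)) F) (hf : f ≠ 0)
    (hhom : f.IsHomogeneous d) (hd : 1 ≤ d) (hdq : d ≤ Fintype.card F + 1) :
    Set.ncard {x : Projectivization F (Fin (n + 2) → F) |
        MvPolynomial.eval x.rep f = 0}
      ≤ d * (Fintype.card F) ^ n + ∑ i ∈ Finset.range n, (Fintype.card F) ^ i := by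
  classical
  set q := Fintype.card F with hqdef
  have hq : 2 ≤ q := Fintype.one_lt_card
  set S := {x : Projectivization F (Fin (n + 2) → F) | MvPolynomial.eval x.rep f = 0} with hS
  set N := (Finset.univ.filter fun x : Fin (n + 2) → F => eval x f = 0).card with hN
  have hNbound : N ≤ (d * (q - 1) + 1) * q ^ n := affine_bound n d f hf hhom hd hdq
  -- the equivalence
  have hmk_mem : ∀ (v : Fin (n + 2) → F) (hv : v ≠ 0), eval v f = 0 →
      Projectivization.mk F v hv ∈ S := by
    intro v hv hfv
    obtain ⟨a, ha⟩ := Projectivization.exists_smul_eq_mk_rep F v hv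
    show eval (Projectivization.mk F v hv).rep f = 0
    rw [← ha, Units.smul_def, hom_eval_smul hhom, hfv, mul_zero]
  have E : (Fˣ × S) ≃ {v : Fin (n + 2) → F // eval v f = 0 ∧ v ≠ 0} := by
    apply Equiv.ofBijective (f := fun p =>
      ⟨(p.1 : F) • p.2.1.rep, by
        rw [hom_eval_smul hhom, p.2.2, mul_zero]
        , smul_ne_zero (Units.ne_zero p.1) p.2.1.rep_nonzero⟩)
    have mk_congr : ∀ (v w : Fin (n + 2) → F) (hv : v ≠ 0) (hw : w ≠ 0), v = w →
        Projectivization.mk F v hv = Projectivization.mk F w hw := by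
      intro v w hv hw hvw; subst hvw; rfl
    constructor
    · rintro ⟨c, x, hx⟩ ⟨c', x', hx'⟩ h
      simp only [Subtype.mk_eq_mk] at h
      have h1 : Projectivization.mk F ((c : F) • x.rep)
            (smul_ne_zero (Units.ne_zero c) x.rep_nonzero)
          = Projectivization.mk F x.rep x.rep_nonzero :=
        (Projectivization.mk_eq_mk_iff F _ _ _ x.rep_nonzero).mpr ⟨c, (Units.smul_def c x.rep).symm ▸ rfl⟩
      have h2 : Projectivization.mk F ((c' : F) • x'.rep)
            (smul_ne_zero (Units.ne_zero c') x'.rep_nonzero)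
          = Projectivization.mk F x'.rep x'.rep_nonzero :=
        (Projectivization.mk_eq_mk_iff F _ _ _ x'.rep_nonzero).mpr ⟨c', (Units.smul_def c' x'.rep).symm ▸ rfl⟩
      have hxx : x = x' := by
        calc x = Projectivization.mk F x.rep x.rep_nonzero := (Projectivization.mk_rep x).symm
          _ = Projectivization.mk F ((c : F) • x.rep)
                (smul_ne_zero (Units.ne_zero c) x.rep_nonzero) := h1.symm
          _ = Projectivization.mk F ((c' : F) • x'.rep)
                (smul_ne_zero (Units.ne_zero c') x'.rep_nonzero) := mk_congr _ _ _ _ h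
          _ = Projectivization.mk F x'.rep x'.rep_nonzero := h2
          _ = x' := Projectivization.mk_rep x'
      have hcc : c = c' := by
        obtain ⟨i, hi⟩ : ∃ i, x'.rep i ≠ 0 := by
          by_contra hcon; push_neg at hcon
          exact x'.rep_nonzero (funext hcon)
        have hfc := congrFun h i
        rw [hxx] at hfc
        simp only [Pi.smul_apply, smul_eq_mul] at hfc
        exact Units.ext (mul_right_cancel₀ hi hfc)
      subst hxx; subst hcc; rfl
    · rintro ⟨v, hv0, hvne⟩
      obtain ⟨a, ha⟩ := Projectivization.exists_smul_eq_mk_rep F v hvne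
      refine ⟨⟨a⁻¹, ⟨Projectivization.mk F v hvne, hmk_mem v hvne hv0⟩⟩, ?_⟩
      simp only [Subtype.mk_eq_mk]
      rw [← ha, Units.smul_def, smul_smul, Units.val_inv_eq_inv_val,
        inv_mul_cancel₀ (Units.ne_zero a), one_smul]
  -- counting
  have hNat : (q - 1) * Nat.card S = N - 1 := by
    have h1 : Nat.card (Fˣ × S) = (q - 1) * Nat.card S := by
      rw [Nat.card_prod, Nat.card_units, Nat.card_eq_fintype_card]
    have h2 : Nat.card {v : Fin (n + 2) → F // eval v f = 0 ∧ v ≠ 0} = N - 1 := by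
      rw [Nat.card_eq_fintype_card, Fintype.card_subtype]
      have : (Finset.univ.filter fun v : Fin (n + 2) → F => eval v f = 0 ∧ v ≠ 0)
          = (Finset.univ.filter fun v : Fin (n + 2) → F => eval v f = 0).erase 0 := by
        ext v
        simp only [Finset.mem_filter, Finset.mem_univ, true_and, Finset.mem_erase]
        tauto
      rw [this, Finset.card_erase_of_mem]
      simp only [Finset.mem_filter, Finset.mem_univ, true_and]
      exact hom_eval_zero hhom hd
    rw [← h1, ← h2, Nat.card_congr E]
  have hmemN : 1 ≤ N := by
    rw [hN]
    refine Finset.card_pos.mpr ⟨0, ?_⟩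
    simp only [Finset.mem_filter, Finset.mem_univ, true_and]
    exact hom_eval_zero hhom hd
  -- final arithmetic over ℤ
  have hfin : S.ncard = Nat.card S := (Nat.card_coe_set_eq S).symm
  rw [hfin]
  have hq1 : (1 : ℤ) ≤ (q : ℤ) - 1 := by
    have : (2 : ℤ) ≤ q := by exact_mod_cast hq
    omega
  have hmain : ((q : ℤ) - 1) * Nat.card S = (N : ℤ) - 1 := by
    have := hNat
    zify [show 1 ≤ q by omega, hmemN] at this
    exact this
  have hNZ : (N : ℤ) ≤ ((d : ℤ) * ((q : ℤ) - 1) + 1) * (q : ℤ) ^ n := by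
    have := hNbound
    zify [show 1 ≤ q by omega] at this
    exact this
  have hgeom : (∑ i ∈ Finset.range n, (q : ℤ) ^ i) * ((q : ℤ) - 1) = (q : ℤ) ^ n - 1 :=
    geom_sum_mul _ n
  have hineq : ((q : ℤ) - 1) * (Nat.card S)
      ≤ ((q : ℤ) - 1) * ((d : ℤ) * (q : ℤ) ^ n + ∑ i ∈ Finset.range n, (q : ℤ) ^ i) := by
    rw [hmain]
    nlinarith [hNZ, hgeom]
  have hle : (Nat.card S : ℤ) ≤ (d : ℤ) * (q : ℤ) ^ n + ∑ i ∈ Finset.range n, (q : ℤ) ^ i :=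
    le_of_mul_le_mul_left hineq (by omega)
  have : (Nat.card S : ℤ) ≤ ((d * q ^ n + ∑ i ∈ Finset.range n, q ^ i : ℕ) : ℤ) := by
    push_cast
    exact hle
  exact_mod_cast this
end
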